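/- arXiv:0710.1466 — 2 statements merged into one kernel-verified Lean document; each statement's English description precedes it below -/
import Mathlib

section
/- For n ≥ 2, the function E(r) = ∫₀^∞ e^{-ry} y^{(n-3)/2} ((y+2i)^{(n-3)/2} - (2i)^{(n-3)/2}) dy satisfies |E(r)| ≤ C_n r^{-(n+1)/2} for all r ≥ 1, with a constant C_n depending only on n. -/
open MeasureTheory Complex

/-- The Bessel error integral
`E(r) = ∫₀^∞ e^{-ry} y^{(n-3)/2} ((y+2i)^{(n-3)/2} - (2i)^{(n-3)/2}) dy`,
with principal-branch complex powers. -/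
noncomputable def besselErr (n : ℕ) (r : ℝ) : ℂ :=
  ∫ y in Set.Ioi (0 : ℝ),
    Complex.exp (-(r * y)) * (y : ℂ) ^ ((((n : ℝ) - 3) / 2 : ℝ) : ℂ) *
      (((y : ℂ) + 2 * Complex.I) ^ ((((n : ℝ) - 3) / 2 : ℝ) : ℂ) -
        (2 * Complex.I) ^ ((((n : ℝ) - 3) / 2 : ℝ) : ℂ))

/-- Mean value theorem bound for the difference of complex powers. -/
lemma besselErr_mvt (n : ℕ) (y : ℝ) (hy : 0 ≤ y) :
    ‖((y:ℂ) + 2*Complex.I) ^ ((((n:ℝ)-3)/2 : ℝ) : ℂ) - (2*Complex.I) ^ ((((n:ℝ)-3)/2 : ℝ) : ℂ)‖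
      ≤ (|((n:ℝ)-3)/2| * (y+2) ^ (n:ℝ)) * y := by
  set α : ℝ := ((n:ℝ)-3)/2 with hα
  set s : Set ℂ := segment ℝ (2*Complex.I) ((y:ℂ) + 2*Complex.I) with hs
  have hmem : ∀ z ∈ s, ∃ t : ℝ, 0 ≤ t ∧ t ≤ 1 ∧ z = (t*y : ℝ) + 2*Complex.I := by
    intro z hz
    rw [hs, segment_eq_image'] at hz
    obtain ⟨t, ⟨ht0, ht1⟩, rfl⟩ := hz
    refine ⟨t, ht0, ht1, ?_⟩
    push_cast [Complex.real_smul]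
    ring
  have hslit : ∀ z ∈ s, z ∈ Complex.slitPlane := by
    intro z hz
    obtain ⟨t, _, _, rfl⟩ := hmem z hz
    refine Or.inr ?_
    simp [Complex.add_im]
  have key := Convex.norm_image_sub_le_of_norm_hasDerivWithin_le
    (f := fun z : ℂ => z ^ (α : ℂ)) (f' := fun z : ℂ => (α:ℂ) * z ^ ((α:ℂ) - 1))
    (s := s) (C := |α| * (y+2) ^ (n:ℝ))
    (fun z hz => ((Complex.hasStrictDerivAt_cpow_const (hslit z hz)).hasDerivAt).hasDerivWithinAt)
    (fun z hz => by
      obtain ⟨t, ht0, ht1, rfl⟩ := hmem z hz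
      have habs2 : (2:ℝ) ≤ ‖((t*y:ℝ) + 2*Complex.I : ℂ)‖ := by
        have := Complex.abs_im_le_norm ((t*y:ℝ) + 2*Complex.I)
        simp only [Complex.add_im, Complex.ofReal_im, Complex.mul_im, Complex.I_im] at this
        simpa using this.trans_eq' (by norm_num)
      have habsle : ‖((t*y:ℝ) + 2*Complex.I : ℂ)‖ ≤ y + 2 := by
        refine (Complex.norm_le_abs_re_add_abs_im _).trans ?_
        simp only [Complex.add_re, Complex.ofReal_re, Complex.add_im]
        have h1 : |(t*y:ℝ) + (2*Complex.I).re| ≤ y := by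
          rw [show (2*Complex.I).re = 0 by simp, add_zero]
          rw [_root_.abs_of_nonneg (mul_nonneg ht0 hy)]
          nlinarith
        have h2 : |((t*y:ℝ):ℂ).im + (2*Complex.I).im| = 2 := by simp
        linarith [h1, h2.le]
      rw [norm_mul]
      have hcast : ((α:ℂ) - 1) = ((α - 1 : ℝ) : ℂ) := by push_cast; ring
      rw [hcast]
      have hnorm : ‖((t*y:ℝ) + 2*Complex.I) ^ ((α - 1 : ℝ):ℂ)‖
          = ‖((t*y:ℝ) + 2*Complex.I : ℂ)‖ ^ (α - 1) := by
        rw [Complex.norm_cpow_real]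
      rw [hnorm]
      have hαnorm : ‖(α:ℂ)‖ = |α| := by rw [Complex.norm_real, Real.norm_eq_abs]
      rw [hαnorm]
      refine mul_le_mul_of_nonneg_left ?_ (abs_nonneg _)
      rcases le_or_gt 1 α with h1 | h1
      · calc ‖((t*y:ℝ) + 2*Complex.I : ℂ)‖ ^ (α - 1) ≤ (y+2) ^ (α-1) :=
              Real.rpow_le_rpow (norm_nonneg _) habsle (by linarith)
          _ ≤ (y+2) ^ (n:ℝ) := by
              refine Real.rpow_le_rpow_of_exponent_le (by linarith) ?_
              have hn0 : (0:ℝ) ≤ n := Nat.cast_nonneg n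
              rw [hα]; linarith
      · calc ‖((t*y:ℝ) + 2*Complex.I : ℂ)‖ ^ (α - 1) ≤ 1 := by
              refine Real.rpow_le_one_of_one_le_of_nonpos (by linarith) (by linarith)
          _ ≤ (y+2) ^ (n:ℝ) := Real.one_le_rpow (by linarith) (by positivity)
      )
    (convex_segment _ _)
    (left_mem_segment ℝ _ _) (right_mem_segment ℝ _ _)
  have hnorm : ‖((y:ℂ) + 2*Complex.I) - 2*Complex.I‖ = y := by
    simp [Complex.norm_real, Real.norm_eq_abs, _root_.abs_of_nonneg hy]
  rw [hnorm] at key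
  exact key

/-- Polynomial growth is dominated by `exp (y/2)`. -/
lemma besselErr_poly_le (n : ℕ) (hn : 1 ≤ n) (y : ℝ) (hy : 0 ≤ y) :
    (y+2) ^ (n:ℝ) ≤ (2*(n:ℝ))^n * Real.exp 1 * Real.exp (y/2) := by
  have hn0 : (1:ℝ) ≤ n := by exact_mod_cast hn
  have h1 : y + 2 ≤ 2*(n:ℝ) * Real.exp ((y+2)/(2*n)) := by
    have := Real.add_one_le_exp ((y+2)/(2*(n:ℝ)))
    have h2n : (0:ℝ) < 2*(n:ℝ) := by linarith
    have h3 := mul_le_mul_of_nonneg_left this h2n.le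
    have heq : 2*(n:ℝ) * ((y+2)/(2*(n:ℝ))) = y+2 := by field_simp
    nlinarith [Real.exp_pos ((y+2)/(2*(n:ℝ)))]
  rw [Real.rpow_natCast]
  calc (y+2)^n ≤ (2*(n:ℝ) * Real.exp ((y+2)/(2*n)))^n :=
        pow_le_pow_left₀ (by linarith) h1 n
    _ = (2*(n:ℝ))^n * Real.exp ((y+2)/(2*n))^n := mul_pow _ _ n
    _ = (2*(n:ℝ))^n * Real.exp 1 * Real.exp (y/2) := by
        rw [← Real.exp_nat_mul]
        have h2n : (2*(n:ℝ)) ≠ 0 := by positivity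
        rw [show (n:ℝ) * ((y+2)/(2*(n:ℝ))) = y/2 + 1 by field_simp]
        rw [Real.exp_add]
        ring

/-- For `n ≥ 2`, `E(r)` satisfies `|E(r)| ≤ C_n r^{-(n+1)/2}` for all `r ≥ 1`, with a
constant `C_n` depending only on `n`. -/
theorem besselErr_bound (n : ℕ) (hn : 2 ≤ n) :
    ∃ C : ℝ, 0 < C ∧ ∀ r : ℝ, 1 ≤ r →
      ‖besselErr n r‖ ≤ C * r ^ (-((n : ℝ) + 1) / 2) := by
  set α : ℝ := ((n:ℝ)-3)/2 with hα
  have hn2 : (2:ℝ) ≤ n := by exact_mod_cast hn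
  have hα2 : 0 < α + 2 := by rw [hα]; linarith
  set K : ℝ := (|α|+1) * ((2*(n:ℝ))^n * Real.exp 1) with hK
  have hKpos : 0 < K := by
    have : (0:ℝ) < 2*(n:ℝ) := by linarith
    have := pow_pos this n
    have := Real.exp_pos 1
    positivity
  refine ⟨K * (2:ℝ)^(α+2) * Real.Gamma (α+2), by positivity, fun r hr => ?_⟩
  have hr0 : (0:ℝ) < r := by linarith
  have hexp_eq : (-((n:ℝ)+1)/2) = -(α+2) := by rw [hα]; ring
  rw [hexp_eq]
  -- integrability of the dominating function
  have hint : IntegrableOn (fun y : ℝ => y ^ (α+1) * Real.exp (-(r/2) * y))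
      (Set.Ioi 0) := by
    have h := integrableOn_rpow_mul_exp_neg_mul_rpow (p := 1) (s := α+1) (b := r/2)
      (by rw [hα]; linarith) one_pos (by linarith)
    simpa [Real.rpow_one] using h
  have hg : Integrable (fun y : ℝ => K * (y ^ (α+1) * Real.exp (-(r/2) * y)))
      (volume.restrict (Set.Ioi 0)) := hint.const_mul K
  have hbound : ‖besselErr n r‖ ≤
      ∫ y in Set.Ioi (0:ℝ), K * (y ^ (α+1) * Real.exp (-(r/2) * y)) := by
    refine norm_integral_le_of_norm_le hg ?_
    filter_upwards [self_mem_ae_restrict measurableSet_Ioi] with y hy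
    have hy0 : 0 < y := hy
    rw [norm_mul, norm_mul]
    have h1 : ‖Complex.exp (-((r:ℂ) * (y:ℂ)))‖ = Real.exp (-(r*y)) := by
      rw [Complex.norm_exp]
      norm_num
    have h2 : ‖(y:ℂ) ^ ((α:ℝ):ℂ)‖ = y ^ α := by
      rw [Complex.norm_cpow_eq_rpow_re_of_pos hy0]
      norm_num
    rw [h1, h2]
    have hdiff := besselErr_mvt n y hy0.le
    rw [← hα] at hdiff
    calc Real.exp (-(r*y)) * y ^ α *
          ‖((y:ℂ) + 2*Complex.I) ^ ((α:ℝ):ℂ) - (2*Complex.I) ^ ((α:ℝ):ℂ)‖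
        ≤ Real.exp (-(r*y)) * y ^ α * ((|α| * (y+2) ^ (n:ℝ)) * y) := by
          have h3 : (0:ℝ) ≤ Real.exp (-(r*y)) * y ^ α := by positivity
          exact mul_le_mul_of_nonneg_left hdiff h3
      _ ≤ Real.exp (-(r*y)) * y ^ α *
            ((|α| * ((2*(n:ℝ))^n * Real.exp 1 * Real.exp (y/2))) * y) := by
          have hB := besselErr_poly_le n (by omega) y hy0.le
          have h3 : (0:ℝ) ≤ Real.exp (-(r*y)) * y ^ α := by positivity
          refine mul_le_mul_of_nonneg_left ?_ h3
          refine mul_le_mul_of_nonneg_right ?_ hy0.le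
          exact mul_le_mul_of_nonneg_left hB (abs_nonneg _)
      _ = (|α| * ((2*(n:ℝ))^n * Real.exp 1)) *
            ((y ^ α * y) * (Real.exp (-(r*y)) * Real.exp (y/2))) := by ring
      _ ≤ ((|α|+1) * ((2*(n:ℝ))^n * Real.exp 1)) *
            ((y ^ α * y) * Real.exp (-(r/2) * y)) := by
          have hee : Real.exp (-(r*y)) * Real.exp (y/2) ≤ Real.exp (-(r/2)*y) := by
            rw [← Real.exp_add]
            apply Real.exp_le_exp.mpr
            nlinarith
          have h4 : (0:ℝ) ≤ y ^ α * y := by positivity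
          have h5 : (0:ℝ) ≤ (2*(n:ℝ))^n * Real.exp 1 := by positivity
          have h6 : |α| ≤ |α| + 1 := by linarith
          refine mul_le_mul (mul_le_mul_of_nonneg_right h6 h5)
            (mul_le_mul_of_nonneg_left hee h4) (by positivity) (by positivity)
      _ = K * (y ^ (α+1) * Real.exp (-(r/2) * y)) := by
          rw [Real.rpow_add_one hy0.ne', hK]
  -- compute the integral
  have hval : ∫ y in Set.Ioi (0:ℝ), K * (y ^ (α+1) * Real.exp (-(r/2) * y))
      = K * ((1/(r/2))^(α+2) * Real.Gamma (α+2)) := by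
    rw [integral_const_mul]
    congr 1
    rw [show (α+1) = (α+2)-1 by ring]
    simp_rw [neg_mul]
    exact Real.integral_rpow_mul_exp_neg_mul_Ioi hα2 (by linarith)
  have hpow : (1/(r/2))^(α+2) = (2:ℝ)^(α+2) * r^(-(α+2)) := by
    rw [one_div_div, Real.div_rpow (by norm_num) hr0.le, Real.rpow_neg hr0.le,
      div_eq_mul_inv]
  calc ‖besselErr n r‖ ≤ K * ((1/(r/2))^(α+2) * Real.Gamma (α+2)) := hval ▸ hbound
    _ = K * (2:ℝ)^(α+2) * Real.Gamma (α+2) * r^(-(α+2)) := by rw [hpow]; ring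
end

section
/- (Hölder inequality in Lorentz spaces) Let 0 < p₁, p₂, p < ∞ and 0 < q₁, q₂, q ≤ ∞ satisfy 1/p = 1/p₁ + 1/p₂ and 1/q = 1/q₁ + 1/q₂. Then for measurable functions f, g on a measure space, ‖fg‖_{L^{p,q}} ≤ C ‖f‖_{L^{p₁,q₁}} ‖g‖_{L^{p₂,q₂}} whenever the right-hand side is finite, with C depending only on the exponents. -/
open MeasureTheory ENNReal NNReal Set

namespace LorentzAux

/-- generalized inverse (decreasing rearrangement) of a distribution function -/
noncomputable def rr (d : ℝ → ℝ≥0∞) (t : ℝ) : ℝ≥0∞ :=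
  ⨅ (s : ℝ≥0) (_ : d s ≤ ENNReal.ofReal t), (s : ℝ≥0∞)

lemma rr_anti (d : ℝ → ℝ≥0∞) : Antitone (rr d) := by
  intro t t' htt'
  refine le_iInf₂ fun s hs => ?_
  exact iInf₂_le s (hs.trans (ENNReal.ofReal_le_ofReal htt'))

lemma rr_le {d : ℝ → ℝ≥0∞} {t : ℝ} {s : ℝ≥0} (hs : d s ≤ ENNReal.ofReal t) :
    rr d t ≤ s := iInf₂_le s hs

/-- characterization of rr via the distribution function, assuming antitonicity and
right-continuity -/
lemma lt_rr_iff {d : ℝ → ℝ≥0∞} (hd : Antitone d)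
    (hrc : ∀ (l : ℝ) (u : ℝ≥0∞), u < d l → ∃ ε : ℝ, 0 < ε ∧ u < d (l + ε))
    (s : ℝ≥0) (t : ℝ) : (s : ℝ≥0∞) < rr d t ↔ ENNReal.ofReal t < d s := by
  constructor
  · intro h
    by_contra hc
    push_neg at hc
    exact absurd (rr_le hc) h.not_ge
  · intro h
    obtain ⟨ε, hε, hε'⟩ := hrc s (ENNReal.ofReal t) h
    have hlt : (s : ℝ≥0∞) < ((((s : ℝ) + ε).toNNReal : ℝ≥0) : ℝ≥0∞) := by
      rw [ENNReal.coe_lt_coe]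
      exact Real.lt_toNNReal_iff_coe_lt.mpr (by linarith)
    refine hlt.trans_le (le_iInf₂ fun s' hs' => ?_)
    rw [ENNReal.coe_le_coe, Real.toNNReal_le_iff_le_coe]
    by_contra hc
    push_neg at hc
    exact absurd (hs'.trans_lt ((hd hc.le).trans_lt' hε')) (lt_irrefl _)

lemma rr_measurable (d : ℝ → ℝ≥0∞) : Measurable (rr d) := (rr_anti d).measurable

/-- the layer-cake computation `∫_{0 < t, t < a} t^(r-1) dt = a^r / r`. -/
lemma layer (a : ℝ≥0∞) {r : ℝ} (hr : 0 < r) :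
    ∫⁻ t in Ioi (0 : ℝ), ({t : ℝ | ENNReal.ofReal t < a}.indicator
      (fun t => ENNReal.ofReal t ^ (r - 1)) t) = a ^ r / ENNReal.ofReal r := by
  rcases eq_or_ne a ⊤ with rfl | ha
  · have h1 : ∀ t : ℝ, ({t : ℝ | ENNReal.ofReal t < ⊤}.indicator
        (fun t => ENNReal.ofReal t ^ (r - 1)) t) = ENNReal.ofReal t ^ (r - 1) := by
      intro t
      rw [Set.indicator_of_mem]
      exact ENNReal.ofReal_lt_top
    simp only [h1]
    rw [ENNReal.top_rpow_of_pos hr, ENNReal.top_div_of_lt_top ENNReal.ofReal_lt_top]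
    by_contra hc
    have hmeas : AEMeasurable (fun t : ℝ => ENNReal.ofReal t ^ (r - 1))
        (volume.restrict (Ioi (0:ℝ))) :=
      (ENNReal.measurable_ofReal.comp measurable_id).pow_const _ |>.aemeasurable
    have hint := integrable_toReal_of_lintegral_ne_top hmeas hc
    have : IntegrableOn (fun t : ℝ => t ^ (r - 1)) (Ioi 0) volume := by
      refine hint.congr (Filter.eventuallyEq_of_mem (self_mem_ae_restrict measurableSet_Ioi) ?_)
      intro t ht
      simp only
      rw [ENNReal.ofReal_rpow_of_pos ht, ENNReal.toReal_ofReal (Real.rpow_nonneg ht.le _)]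
    exact not_integrableOn_Ioi_rpow (r - 1) this
  · set b := a.toReal with hb
    have hb0 : 0 ≤ b := ENNReal.toReal_nonneg
    have hseteq : (Ioi (0:ℝ)) ∩ {t : ℝ | ENNReal.ofReal t < a} = Ioo 0 b := by
      ext t
      simp only [mem_inter_iff, mem_Ioi, mem_setOf_eq, mem_Ioo]
      constructor
      · rintro ⟨ht, hta⟩
        exact ⟨ht, (ENNReal.ofReal_lt_iff_lt_toReal ht.le ha).mp hta⟩
      · rintro ⟨ht, htb⟩
        exact ⟨ht, (ENNReal.ofReal_lt_iff_lt_toReal ht.le ha).mpr htb⟩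
    have hmeasset : MeasurableSet {t : ℝ | ENNReal.ofReal t < a} := by
      have : Measurable fun t : ℝ => ENNReal.ofReal t := ENNReal.measurable_ofReal
      exact measurableSet_lt this measurable_const
    rw [← lintegral_indicator measurableSet_Ioi, Set.indicator_indicator,
      lintegral_indicator (measurableSet_Ioi.inter hmeasset), hseteq]
    have hcong : ∀ t ∈ Ioo (0:ℝ) b, ENNReal.ofReal t ^ (r - 1) = ENNReal.ofReal (t ^ (r - 1)) := by
      intro t ht
      exact ENNReal.ofReal_rpow_of_pos ht.1
    rw [setLIntegral_congr_fun measurableSet_Ioo hcong]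
    have hInt : IntegrableOn (fun t : ℝ => t ^ (r - 1)) (Ioo 0 b) volume := by
      have := (intervalIntegral.intervalIntegrable_rpow' (a := 0) (b := b)
        (r := r - 1) (by linarith)).1
      exact (this.mono_set Set.Ioo_subset_Ioc_self)
    rw [← MeasureTheory.ofReal_integral_eq_lintegral_ofReal hInt]
    · have : ∫ t in Ioo (0:ℝ) b, t ^ (r - 1) = b ^ r / r := by
        rw [← integral_Ioc_eq_integral_Ioo, ← intervalIntegral.integral_of_le hb0]
        rw [integral_rpow (Or.inl (by linarith))]
        rw [Real.zero_rpow (by linarith : r - 1 + 1 ≠ 0)]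
        ring_nf
      rw [this]
      rw [ENNReal.ofReal_div_of_pos hr]
      congr 1
      rw [← ENNReal.ofReal_rpow_of_nonneg hb0 hr.le, ENNReal.ofReal_toReal ha]
    · filter_upwards [self_mem_ae_restrict measurableSet_Ioo] with t ht
      exact Real.rpow_nonneg ht.1.le _


lemma opow_ne_top {x : ℝ} (hx : 0 < x) (y : ℝ) : ENNReal.ofReal x ^ y ≠ ⊤ := by
  intro h
  rcases ENNReal.rpow_eq_top_iff.mp h with ⟨h1, _⟩ | ⟨h1, _⟩
  · rw [ENNReal.ofReal_eq_zero] at h1; linarith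
  · exact ENNReal.ofReal_ne_top h1

lemma mem_iff {d : ℝ → ℝ≥0∞} (hd : Antitone d)
    (hrc : ∀ (l : ℝ) (u : ℝ≥0∞), u < d l → ∃ ε : ℝ, 0 < ε ∧ u < d (l + ε))
    {l : ℝ} (hl : 0 ≤ l) (t : ℝ) :
    (ENNReal.ofReal l < rr d t ↔ ENNReal.ofReal t < d l) := by
  have h1 : ENNReal.ofReal l = ((l.toNNReal : ℝ≥0) : ℝ≥0∞) := rfl
  have h2 : d ((l.toNNReal : ℝ≥0) : ℝ) = d l := by rw [Real.coe_toNNReal l hl]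
  rw [h1, lt_rr_iff hd hrc, h2]

/-- the central Fubini-type identity relating the Lorentz integral of `d` with that of its
generalized inverse `rr d`. -/
lemma key_eq {d : ℝ → ℝ≥0∞} (hd : Antitone d)
    (hrc : ∀ (l : ℝ) (u : ℝ≥0∞), u < d l → ∃ ε : ℝ, 0 < ε ∧ u < d (l + ε))
    {r p' : ℝ} (hr : 0 < r) (hp' : 0 < p') :
    ∫⁻ t in Ioi (0:ℝ), ENNReal.ofReal t ^ (r / p' - 1) * rr d t ^ r
      = ENNReal.ofReal p' * ∫⁻ l in Ioi (0:ℝ), ENNReal.ofReal l ^ (r - 1) * d l ^ (r / p') := by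
  set S : Set (ℝ × ℝ) := {z | ENNReal.ofReal z.1 < rr d z.2} with hS
  have hSmeas : MeasurableSet S :=
    measurableSet_lt (ENNReal.measurable_ofReal.comp measurable_fst)
      ((rr_measurable d).comp measurable_snd)
  set H : ℝ × ℝ → ℝ≥0∞ := fun z =>
    S.indicator (fun _ => 1) z * (ENNReal.ofReal z.1 ^ (r - 1) * ENNReal.ofReal z.2 ^ (r / p' - 1))
    with hH
  have hHmeas : Measurable H := by
    apply Measurable.mul
    · exact (measurable_const.indicator hSmeas)
    · exact ((ENNReal.measurable_ofReal.comp measurable_fst).pow_const _).mul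
        ((ENNReal.measurable_ofReal.comp measurable_snd).pow_const _)
  have hrp' : (0:ℝ) < r / p' := by positivity
  -- step A : LHS = ofReal r * double integral
  have stepA : ∫⁻ t in Ioi (0:ℝ), ENNReal.ofReal t ^ (r / p' - 1) * rr d t ^ r
      = ENNReal.ofReal r * ∫⁻ t in Ioi (0:ℝ), ∫⁻ l in Ioi (0:ℝ), H (l, t) := by
    rw [← lintegral_const_mul' _ _ ENNReal.ofReal_ne_top]
    refine setLIntegral_congr_fun measurableSet_Ioi ?_
    intro t ht
    dsimp only
    have hcong : ∀ l ∈ Ioi (0:ℝ), H (l, t) =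
        ENNReal.ofReal t ^ (r / p' - 1) *
          ({l : ℝ | ENNReal.ofReal l < rr d t}.indicator
            (fun l => ENNReal.ofReal l ^ (r - 1)) l) := by
      intro l hl
      by_cases hmem : ENNReal.ofReal l < rr d t
      · rw [hH]; simp only
        rw [Set.indicator_of_mem (show (l, t) ∈ S from hmem),
          Set.indicator_of_mem (show l ∈ {l : ℝ | ENNReal.ofReal l < rr d t} from hmem)]
        ring
      · rw [hH]; simp only
        rw [Set.indicator_of_notMem (show (l, t) ∉ S from hmem),
          Set.indicator_of_notMem (show l ∉ {l : ℝ | ENNReal.ofReal l < rr d t} from hmem)]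
        simp
    rw [setLIntegral_congr_fun measurableSet_Ioi hcong,
      lintegral_const_mul' _ _ (opow_ne_top ht _)]
    rw [layer (rr d t) hr]
    rw [← mul_assoc, mul_comm (ENNReal.ofReal r) _, mul_assoc,
      ENNReal.mul_div_cancel (by simp [hr]) ENNReal.ofReal_ne_top]
  -- step B : swap
  have stepB : ∫⁻ t in Ioi (0:ℝ), ∫⁻ l in Ioi (0:ℝ), H (l, t)
      = ∫⁻ l in Ioi (0:ℝ), ∫⁻ t in Ioi (0:ℝ), H (l, t) := by
    exact lintegral_lintegral_swap (f := fun t l => H (l, t))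
      (show AEMeasurable (fun z : ℝ × ℝ => H (z.2, z.1)) _ from
        (hHmeas.comp measurable_swap).aemeasurable)
  -- step C : inner integral for fixed l
  have stepC : ∀ l ∈ Ioi (0:ℝ), ∫⁻ t in Ioi (0:ℝ), H (l, t)
      = ENNReal.ofReal l ^ (r - 1) * (d l ^ (r / p') / ENNReal.ofReal (r / p')) := by
    intro l hl
    have hcong : ∀ t ∈ Ioi (0:ℝ), H (l, t) =
        ENNReal.ofReal l ^ (r - 1) *
          ({t : ℝ | ENNReal.ofReal t < d l}.indicator
            (fun t => ENNReal.ofReal t ^ (r / p' - 1)) t) := by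
      intro t ht
      have hiff := mem_iff hd hrc (le_of_lt hl) t
      by_cases hmem : ENNReal.ofReal t < d l
      · rw [hH]; simp only
        rw [Set.indicator_of_mem (show (l, t) ∈ S from hiff.mpr hmem),
          Set.indicator_of_mem (show t ∈ {t : ℝ | ENNReal.ofReal t < d l} from hmem)]
        ring
      · rw [hH]; simp only
        rw [Set.indicator_of_notMem (show (l, t) ∉ S from fun hc => hmem (hiff.mp hc)),
          Set.indicator_of_notMem (show t ∉ {t : ℝ | ENNReal.ofReal t < d l} from hmem)]
        simp
    rw [setLIntegral_congr_fun measurableSet_Ioi hcong,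
      lintegral_const_mul' _ _ (opow_ne_top hl _)]
    rw [layer (d l) hrp']
  calc ∫⁻ t in Ioi (0:ℝ), ENNReal.ofReal t ^ (r / p' - 1) * rr d t ^ r
      = ENNReal.ofReal r * ∫⁻ t in Ioi (0:ℝ), ∫⁻ l in Ioi (0:ℝ), H (l, t) := stepA
    _ = ENNReal.ofReal r * ∫⁻ l in Ioi (0:ℝ), ∫⁻ t in Ioi (0:ℝ), H (l, t) := by rw [stepB]
    _ = ENNReal.ofReal r * ∫⁻ l in Ioi (0:ℝ),
          (ENNReal.ofReal l ^ (r - 1) * d l ^ (r / p')) * (ENNReal.ofReal (r / p'))⁻¹ := by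
        congr 1
        refine setLIntegral_congr_fun measurableSet_Ioi ?_
        intro l hl
        dsimp only
        rw [stepC l hl, div_eq_mul_inv, mul_assoc]
    _ = (ENNReal.ofReal r * (ENNReal.ofReal (r / p'))⁻¹) *
          ∫⁻ l in Ioi (0:ℝ), ENNReal.ofReal l ^ (r - 1) * d l ^ (r / p') := by
        rw [lintegral_mul_const' _ _ (by simp [ENNReal.ofReal_eq_zero, not_le, hrp'])]
        ring
    _ = ENNReal.ofReal p' * ∫⁻ l in Ioi (0:ℝ), ENNReal.ofReal l ^ (r - 1) * d l ^ (r / p') := by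
        congr 1
        rw [← div_eq_mul_inv, ← ENNReal.ofReal_div_of_pos hrp']
        congr 1
        field_simp

/-- scaling of the Lebesgue integral on `(0,∞)` under `t ↦ t/2`. -/
lemma scale (φ : ℝ → ℝ≥0∞) (hφ : Measurable φ) :
    ∫⁻ t in Ioi (0:ℝ), φ (t / 2) = 2 * ∫⁻ t in Ioi (0:ℝ), φ t := by
  have hT : Measurable fun x : ℝ => 2 * x := by fun_prop
  have hvol : (volume : Measure ℝ) = (2 : ℝ≥0∞) • Measure.map (fun x : ℝ => 2 * x) volume := by
    rw [Real.map_volume_mul_left (two_ne_zero), smul_smul]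
    have h1 : (2:ℝ≥0∞) * ENNReal.ofReal |(2:ℝ)⁻¹| = 1 := by
      rw [show |(2:ℝ)⁻¹| = (2:ℝ)⁻¹ from abs_of_pos (by norm_num),
        show (2:ℝ≥0∞) = ENNReal.ofReal 2 from by norm_num,
        ← ENNReal.ofReal_mul (by norm_num)]
      norm_num
    rw [h1, one_smul]
  have hpre : (fun x : ℝ => 2 * x) ⁻¹' (Ioi 0) = Ioi 0 := by
    ext x; simp only [mem_preimage, mem_Ioi]; constructor <;> intro h <;> linarith
  conv_lhs => rw [hvol]
  rw [Measure.restrict_smul, lintegral_smul_measure,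
    Measure.restrict_map hT measurableSet_Ioi, hpre,
    lintegral_map (show Measurable fun a : ℝ => φ (a / 2) by fun_prop) hT]
  congr 1
  refine setLIntegral_congr_fun measurableSet_Ioi ?_
  intro t ht
  norm_num


lemma exists_lt {d : ℝ → ℝ≥0∞} {t : ℝ} {e : ℝ≥0∞} (h : rr d t < e) :
    ∃ s : ℝ≥0, d s ≤ ENNReal.ofReal t ∧ (s : ℝ≥0∞) < e := by
  obtain ⟨s, hs⟩ := iInf_lt_iff.mp h
  by_cases hP : d s ≤ ENNReal.ofReal t
  · exact ⟨s, hP, by simpa [hP] using hs⟩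
  · rw [iInf_neg hP] at hs
    exact absurd hs (not_top_lt)

section Dist

variable {α : Type} [MeasurableSpace α] (μ : Measure α)

lemma dist_anti (f : α → ℂ) : Antitone (fun l : ℝ => μ {x | l < ‖f x‖}) :=
  fun _ _ hab => measure_mono fun _ hx => hab.trans_lt hx

lemma union_eq (f : α → ℂ) (l : ℝ) :
    {x | l < ‖f x‖} = ⋃ n : ℕ, {x | l + 1 / ((n : ℝ) + 1) < ‖f x‖} := by
  ext x
  simp only [Set.mem_setOf_eq, Set.mem_iUnion]
  constructor
  · intro h
    obtain ⟨n, hn⟩ := exists_nat_one_div_lt (sub_pos.mpr h)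
    exact ⟨n, by push_cast at hn ⊢; linarith⟩
  · rintro ⟨n, hn⟩
    have h0 : (0:ℝ) < 1 / ((n:ℝ) + 1) := by positivity
    linarith

lemma dist_union_mono (f : α → ℂ) (l : ℝ) :
    Directed (· ⊆ ·) (fun n : ℕ => {x | l + 1 / ((n : ℝ) + 1) < ‖f x‖}) := by
  refine Monotone.directed_le fun m n hmn x hx => ?_
  simp only [Set.mem_setOf_eq] at hx ⊢
  have h1 : 1 / ((n:ℝ) + 1) ≤ 1 / ((m:ℝ) + 1) := by
    apply one_div_le_one_div_of_le (by positivity)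
    have : (m:ℝ) ≤ (n:ℝ) := by exact_mod_cast hmn
    linarith
  linarith

lemma dist_rc (f : α → ℂ) : ∀ (l : ℝ) (u : ℝ≥0∞), u < μ {x | l < ‖f x‖} →
    ∃ ε : ℝ, 0 < ε ∧ u < μ {x | l + ε < ‖f x‖} := by
  intro l u hu
  rw [union_eq f l, Directed.measure_iUnion (dist_union_mono f l)] at hu
  obtain ⟨n, hn⟩ := lt_iSup_iff.mp hu
  exact ⟨1 / ((n:ℝ) + 1), by positivity, hn⟩

lemma measure_pos_norm_le (g : α → ℂ) {c : ℝ≥0∞}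
    (hg : ∀ s : ℝ, 0 < s → μ {x | s < ‖g x‖} ≤ c) : μ {x | 0 < ‖g x‖} ≤ c := by
  rw [union_eq g 0, Directed.measure_iUnion (dist_union_mono g 0)]
  refine iSup_le fun n => ?_
  have := hg (0 + 1 / ((n:ℝ) + 1)) (by positivity)
  exact this

lemma dist_mul_le (f g : α → ℂ) {s u : ℝ} (hs : 0 ≤ s) (hu : 0 ≤ u) :
    μ {x | s * u < ‖f x * g x‖} ≤ μ {x | s < ‖f x‖} + μ {x | u < ‖g x‖} := by
  refine (measure_mono ?_).trans (measure_union_le _ _)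
  intro x hx
  simp only [Set.mem_setOf_eq, Set.mem_union] at hx ⊢
  by_contra hcon
  push_neg at hcon
  rw [norm_mul] at hx
  nlinarith [norm_nonneg (f x), norm_nonneg (g x), hcon.1, hcon.2]

lemma subset_pos_left (f g : α → ℂ) {l : ℝ} (hl : 0 ≤ l) :
    {x | l < ‖f x * g x‖} ⊆ {x | 0 < ‖f x‖} := by
  intro x hx
  simp only [Set.mem_setOf_eq] at hx ⊢
  by_contra hcz
  push_neg at hcz
  have : ‖f x‖ = 0 := le_antisymm hcz (norm_nonneg _)
  rw [norm_mul, this, zero_mul] at hx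
  linarith

lemma subset_pos_right (f g : α → ℂ) {l : ℝ} (hl : 0 ≤ l) :
    {x | l < ‖f x * g x‖} ⊆ {x | 0 < ‖g x‖} := by
  intro x hx
  simp only [Set.mem_setOf_eq] at hx ⊢
  by_contra hcz
  push_neg at hcz
  have : ‖g x‖ = 0 := le_antisymm hcz (norm_nonneg _)
  rw [norm_mul, this, mul_zero] at hx
  linarith

/-- the fundamental product estimate for rearrangements -/
lemma rr_mul_le (f g : α → ℂ) {t : ℝ} (ht : 0 ≤ t) :
    rr (fun l => μ {x | l < ‖f x * g x‖}) t ≤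
      rr (fun l => μ {x | l < ‖f x‖}) (t / 2) * rr (fun l => μ {x | l < ‖g x‖}) (t / 2) := by
  set df : ℝ → ℝ≥0∞ := fun l => μ {x | l < ‖f x‖} with hdf
  set dg : ℝ → ℝ≥0∞ := fun l => μ {x | l < ‖g x‖} with hdg
  set dfg : ℝ → ℝ≥0∞ := fun l => μ {x | l < ‖f x * g x‖} with hdfg
  have hhalf : ENNReal.ofReal (t / 2) + ENNReal.ofReal (t / 2) = ENNReal.ofReal t := by
    rw [← ENNReal.ofReal_add (by linarith) (by linarith)]
    norm_num
  have hsub : ∀ s₁ s₂ : ℝ≥0, dfg ((s₁ : ℝ) * (s₂ : ℝ)) ≤ df s₁ + dg s₂ := by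
    intro s₁ s₂
    refine (measure_mono ?_).trans (measure_union_le _ _)
    intro x hx
    simp only [Set.mem_setOf_eq, Set.mem_union] at hx ⊢
    by_contra hcon
    push_neg at hcon
    rw [norm_mul] at hx
    nlinarith [norm_nonneg (f x), norm_nonneg (g x), s₁.coe_nonneg, s₂.coe_nonneg,
      hcon.1, hcon.2]
  by_cases hc0 : rr dg (t / 2) = 0
  · -- g is essentially zero-ish : rr dfg t = 0
    have hg : ∀ s : ℝ, 0 < s → dg s ≤ ENNReal.ofReal (t / 2) := by
      intro s hs
      obtain ⟨s', hs'd, hs'lt⟩ := exists_lt (show rr dg (t / 2) < (s.toNNReal : ℝ≥0∞) by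
        rw [hc0]; exact ENNReal.coe_pos.mpr (Real.toNNReal_pos.mpr hs))
      have h1 : (s' : ℝ) ≤ s := by
        have := ENNReal.coe_lt_coe.mp hs'lt
        have := (Real.lt_toNNReal_iff_coe_lt).mp this
        linarith
      exact (dist_anti μ g h1) |>.trans hs'd
    have hz : ∀ s : ℝ≥0, 0 < s → dfg s ≤ ENNReal.ofReal t := by
      intro s hs
      have hsubz : {x | (s : ℝ) < ‖f x * g x‖} ⊆ {x | 0 < ‖g x‖} := by
        intro x hx
        simp only [Set.mem_setOf_eq] at hx ⊢
        by_contra hcz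
        push_neg at hcz
        have : ‖g x‖ = 0 := le_antisymm hcz (norm_nonneg _)
        rw [norm_mul, this, mul_zero] at hx
        exact absurd hx (not_lt.mpr s.coe_nonneg)
      calc dfg s ≤ μ {x | 0 < ‖g x‖} := measure_mono hsubz
        _ ≤ ENNReal.ofReal (t / 2) := measure_pos_norm_le μ g hg
        _ ≤ ENNReal.ofReal t := ENNReal.ofReal_le_ofReal (by linarith)
    rw [hc0, mul_zero]
    refine ENNReal.le_of_forall_pos_le_add fun ε hε _ => ?_
    rw [zero_add]
    exact rr_le (hz ε hε)
  · by_cases hb0 : rr df (t / 2) = 0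
    · -- f is essentially zero-ish
      have hf : ∀ s : ℝ, 0 < s → df s ≤ ENNReal.ofReal (t / 2) := by
        intro s hs
        obtain ⟨s', hs'd, hs'lt⟩ := exists_lt (show rr df (t / 2) < (s.toNNReal : ℝ≥0∞) by
          rw [hb0]; exact ENNReal.coe_pos.mpr (Real.toNNReal_pos.mpr hs))
        have h1 : (s' : ℝ) ≤ s := by
          have := ENNReal.coe_lt_coe.mp hs'lt
          have := (Real.lt_toNNReal_iff_coe_lt).mp this
          linarith
        exact (dist_anti μ f h1) |>.trans hs'd
      have hz : ∀ s : ℝ≥0, 0 < s → dfg s ≤ ENNReal.ofReal t := by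
        intro s hs
        have hsubz : {x | (s : ℝ) < ‖f x * g x‖} ⊆ {x | 0 < ‖f x‖} := by
          intro x hx
          simp only [Set.mem_setOf_eq] at hx ⊢
          by_contra hcz
          push_neg at hcz
          have : ‖f x‖ = 0 := le_antisymm hcz (norm_nonneg _)
          rw [norm_mul, this, zero_mul] at hx
          exact absurd hx (not_lt.mpr s.coe_nonneg)
        calc dfg s ≤ μ {x | 0 < ‖f x‖} := measure_mono hsubz
          _ ≤ ENNReal.ofReal (t / 2) := measure_pos_norm_le μ f hf
          _ ≤ ENNReal.ofReal t := ENNReal.ofReal_le_ofReal (by linarith)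
      rw [hb0, zero_mul]
      refine ENNReal.le_of_forall_pos_le_add fun ε hε _ => ?_
      rw [zero_add]
      exact rr_le (hz ε hε)
    · by_cases hbtop : rr df (t / 2) = ⊤
      · rw [hbtop, ENNReal.top_mul hc0]; exact le_top
      · by_cases hctop : rr dg (t / 2) = ⊤
        · rw [hctop, ENNReal.mul_top hb0]; exact le_top
        · -- main epsilon case
          refine ENNReal.le_of_forall_pos_le_add fun ε hε hbc => ?_
          obtain ⟨b, hbeq'⟩ := ENNReal.lt_iff_exists_coe.mp (lt_top_iff_ne_top.mpr hbtop)
          have hbeq : (b : ℝ≥0∞) = rr df (t / 2) := hbeq'.1.symm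
          obtain ⟨c, hceq'⟩ := ENNReal.lt_iff_exists_coe.mp (lt_top_iff_ne_top.mpr hctop)
          have hceq : (c : ℝ≥0∞) = rr dg (t / 2) := hceq'.1.symm
          have hbc1pos : (0:ℝ≥0) < b + c + 1 :=
            add_pos_of_nonneg_of_pos zero_le one_pos
          have hdiv : (0:ℝ≥0) < ε / (b + c + 1) :=
            pos_iff_ne_zero.mpr (div_ne_zero hε.ne' hbc1pos.ne')
          set δ : ℝ≥0 := min 1 (ε / (b + c + 1)) with hδdef
          have hδpos : 0 < δ := lt_min one_pos hdiv
          have h1 : rr df (t / 2) < rr df (t / 2) + (δ : ℝ≥0∞) :=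
            ENNReal.lt_add_right hbtop (by exact_mod_cast hδpos.ne')
          obtain ⟨s₁, hs₁d, hs₁lt⟩ := exists_lt h1
          have h2 : rr dg (t / 2) < rr dg (t / 2) + (δ : ℝ≥0∞) :=
            ENNReal.lt_add_right hctop (by exact_mod_cast hδpos.ne')
          obtain ⟨s₂, hs₂d, hs₂lt⟩ := exists_lt h2
          have hs₁ : s₁ ≤ b + δ := by
            rw [← hbeq, ← ENNReal.coe_add, ENNReal.coe_lt_coe] at hs₁lt
            exact hs₁lt.le
          have hs₂ : s₂ ≤ c + δ := by
            rw [← hceq, ← ENNReal.coe_add, ENNReal.coe_lt_coe] at hs₂lt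
            exact hs₂lt.le
          have hmain : rr dfg t ≤ ((s₁ * s₂ : ℝ≥0) : ℝ≥0∞) := by
            apply rr_le
            rw [NNReal.coe_mul]
            exact (hsub s₁ s₂).trans (le_trans (add_le_add hs₁d hs₂d) hhalf.le)
          have hfinal : ((s₁ * s₂ : ℝ≥0) : ℝ≥0∞) ≤ (↑(b * c) : ℝ≥0∞) + ↑ε := by
            rw [← ENNReal.coe_add, ENNReal.coe_le_coe]
            have hδ1 : δ ≤ 1 := min_le_left _ _
            have hδ2 : δ * (b + c + 1) ≤ ε := by
              calc δ * (b + c + 1) ≤ (ε / (b + c + 1)) * (b + c + 1) :=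
                    mul_le_mul_of_nonneg_right (min_le_right _ _) zero_le
                _ = ε := div_mul_cancel₀ _ hbc1pos.ne'
            have key : (b + δ) * (c + δ) ≤ b * c + ε := by
              rw [← NNReal.coe_le_coe]
              rw [← NNReal.coe_le_coe] at hδ1 hδ2
              push_cast at hδ1 hδ2 ⊢
              nlinarith [δ.coe_nonneg, b.coe_nonneg, c.coe_nonneg]
            exact le_trans (mul_le_mul' hs₁ hs₂) key
          rw [← hbeq, ← hceq, ← ENNReal.coe_mul]
          exact hmain.trans hfinal

end Dist

/-- rearrangement controlled by the weak norm -/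
lemma weak_bound {d : ℝ → ℝ≥0∞} (hd : Antitone d)
    (hrc : ∀ (l : ℝ) (u : ℝ≥0∞), u < d l → ∃ ε : ℝ, 0 < ε ∧ u < d (l + ε))
    {p' : ℝ} (hp' : 0 < p') {t : ℝ} (ht : 0 < t) :
    ENNReal.ofReal t ^ (1 / p') * rr d t ≤
      ⨆ (l : ℝ) (_ : 0 < l), ENNReal.ofReal l * d l ^ (1 / p') := by
  set W := ⨆ (l : ℝ) (_ : 0 < l), ENNReal.ofReal l * d l ^ (1 / p') with hW
  set X := ENNReal.ofReal t ^ (1 / p') with hX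
  have hX0 : X ≠ 0 := by
    rw [hX]
    simp only [ne_eq, ENNReal.rpow_eq_zero_iff, not_or, not_and, not_lt]
    constructor
    · intro h; exact absurd h (by simp [ENNReal.ofReal_eq_zero, not_le, ht])
    · intro h; exact absurd h ENNReal.ofReal_ne_top
  have hXtop : X ≠ ⊤ := opow_ne_top ht _
  have hrr : rr d t ≤ W / X := by
    refine ENNReal.le_of_forall_nnreal_lt fun s hs => ?_
    rw [ENNReal.le_div_iff_mul_le (Or.inl hX0) (Or.inl hXtop)]
    rcases eq_or_lt_of_le (zero_le : (0:ℝ≥0) ≤ s) with hs0 | hs0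
    · rw [← hs0]; simp
    · have hds := (lt_rr_iff hd hrc s t).mp hs
      have hle : (s : ℝ≥0∞) * X ≤ ENNReal.ofReal (s : ℝ) * d (s : ℝ) ^ (1 / p') := by
        rw [ENNReal.ofReal_coe_nnreal]
        exact mul_le_mul_right (ENNReal.rpow_le_rpow hds.le (by positivity)) _
      refine hle.trans ?_
      exact le_iSup₂ (f := fun (l : ℝ) (_ : 0 < l) => ENNReal.ofReal l * d l ^ (1 / p'))
        (s : ℝ) (by exact_mod_cast hs0)
  calc X * rr d t ≤ X * (W / X) := mul_le_mul_right hrr X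
    _ ≤ W := ENNReal.mul_div_le

/-- three-exponent Hölder inequality with a weight -/
lemma holder3 (ν : Measure ℝ) {F G w : ℝ → ℝ≥0∞}
    (hF : Measurable F) (hG : Measurable G) (hw : Measurable w)
    {r r₁ r₂ : ℝ} (hr : 0 < r) (h1 : r < r₁) (h2 : r < r₂) (hsum : r / r₁ + r / r₂ = 1) :
    ∫⁻ x, (F x * G x) ^ r * w x ∂ν ≤
      (∫⁻ x, F x ^ r₁ * w x ∂ν) ^ (r / r₁) * (∫⁻ x, G x ^ r₂ * w x ∂ν) ^ (r / r₂) := by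
  have hr₁ : 0 < r₁ := hr.trans h1
  have hr₂ : 0 < r₂ := hr.trans h2
  have hconj : (r₁ / r).HolderConjugate (r₂ / r) := by
    refine Real.holderConjugate_iff.mpr ⟨(one_lt_div hr).mpr h1, ?_⟩
    rw [inv_div, inv_div]
    exact hsum
  set u : ℝ → ℝ≥0∞ := fun x => F x ^ r * w x ^ (r / r₁) with hu
  set v : ℝ → ℝ≥0∞ := fun x => G x ^ r * w x ^ (r / r₂) with hv
  have humeas : AEMeasurable u ν := ((hF.pow_const _).mul (hw.pow_const _)).aemeasurable
  have hvmeas : AEMeasurable v ν := ((hG.pow_const _).mul (hw.pow_const _)).aemeasurable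
  have key := ENNReal.lintegral_mul_le_Lp_mul_Lq ν hconj humeas hvmeas
  have huv : ∀ x, (u * v) x = (F x * G x) ^ r * w x := by
    intro x
    simp only [Pi.mul_apply, hu, hv]
    rw [ENNReal.mul_rpow_of_nonneg _ _ hr.le, mul_mul_mul_comm]
    congr 1
    rw [← ENNReal.rpow_add_of_nonneg _ _ (by positivity) (by positivity), hsum,
      ENNReal.rpow_one]
  have hup : ∀ x, u x ^ (r₁ / r) = F x ^ r₁ * w x := by
    intro x
    rw [hu]
    rw [ENNReal.mul_rpow_of_nonneg _ _ (by positivity), ← ENNReal.rpow_mul, ← ENNReal.rpow_mul]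
    congr 1
    · congr 1; field_simp
    · congr 1; field_simp; exact ENNReal.rpow_one _
  have hvp : ∀ x, v x ^ (r₂ / r) = G x ^ r₂ * w x := by
    intro x
    rw [hv]
    rw [ENNReal.mul_rpow_of_nonneg _ _ (by positivity), ← ENNReal.rpow_mul, ← ENNReal.rpow_mul]
    congr 1
    · congr 1; field_simp
    · congr 1; field_simp; exact ENNReal.rpow_one _
  have hd₁ : 1 / (r₁ / r) = r / r₁ := one_div_div _ _
  have hd₂ : 1 / (r₂ / r) = r / r₂ := one_div_div _ _
  calc ∫⁻ x, (F x * G x) ^ r * w x ∂ν = ∫⁻ x, (u * v) x ∂ν := by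
        refine lintegral_congr fun x => (huv x).symm
    _ ≤ (∫⁻ x, u x ^ (r₁ / r) ∂ν) ^ (1 / (r₁ / r)) *
          (∫⁻ x, v x ^ (r₂ / r) ∂ν) ^ (1 / (r₂ / r)) := key
    _ = (∫⁻ x, F x ^ r₁ * w x ∂ν) ^ (r / r₁) * (∫⁻ x, G x ^ r₂ * w x ∂ν) ^ (r / r₂) := by
        rw [hd₁, hd₂]
        congr 1
        · congr 1; exact lintegral_congr fun x => hup x
        · congr 1; exact lintegral_congr fun x => hvp x


/-- rearranging the Lorentz norm integrand -/
lemma integral_reform (d : ℝ → ℝ≥0∞) {r' p' : ℝ} (hr' : 0 < r') (hp' : 0 < p') :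
    ∫⁻ l in Ioi (0:ℝ), (ENNReal.ofReal l * d l ^ (1 / p')) ^ r' / ENNReal.ofReal l
      = ∫⁻ l in Ioi (0:ℝ), ENNReal.ofReal l ^ (r' - 1) * d l ^ (r' / p') := by
  refine setLIntegral_congr_fun measurableSet_Ioi ?_
  intro l hl
  dsimp only
  have hl' : (0:ℝ) < l := hl
  have hl0 : ENNReal.ofReal l ≠ 0 := by simp [ENNReal.ofReal_eq_zero, not_le, hl']
  rw [ENNReal.mul_rpow_of_nonneg _ _ hr'.le, ← ENNReal.rpow_mul,
    show 1 / p' * r' = r' / p' by field_simp,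
    div_eq_mul_inv, mul_right_comm, ← div_eq_mul_inv,
    show ENNReal.ofReal l ^ r' / ENNReal.ofReal l
      = ENNReal.ofReal l ^ (r' - 1) from by
        rw [ENNReal.rpow_sub _ _ hl0 ENNReal.ofReal_ne_top, ENNReal.rpow_one]]

/-- weight and split functions used in the Hölder step -/
noncomputable def UU (d : ℝ → ℝ≥0∞) (p' : ℝ) : ℝ → ℝ≥0∞ :=
  fun t => ENNReal.ofReal t ^ (1 / p') * rr d (t / 2)

noncomputable def WW : ℝ → ℝ≥0∞ := fun t => (ENNReal.ofReal t)⁻¹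

lemma UU_measurable (d : ℝ → ℝ≥0∞) (p' : ℝ) : Measurable (UU d p') := by
  apply Measurable.mul
  · exact ENNReal.measurable_ofReal.pow_const _
  · exact (rr_measurable d).comp (measurable_id.div_const 2)

lemma WW_measurable : Measurable WW := ENNReal.measurable_ofReal.inv

section Chain

variable {α : Type} [MeasurableSpace α] (μ : Measure α)

/-- first chain inequality: from the Lorentz integral of `fg` to the split product -/
lemma chain1 (f g : α → ℂ) {p₁ p₂ p r : ℝ}
    (hp₁ : 0 < p₁) (hp₂ : 0 < p₂) (hp : 0 < p) (hr : 0 < r)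
    (hpsum : 1 / p = 1 / p₁ + 1 / p₂) :
    ENNReal.ofReal p * ∫⁻ l in Ioi (0:ℝ),
        ENNReal.ofReal l ^ (r - 1) * (μ {x | l < ‖f x * g x‖}) ^ (r / p)
      ≤ ∫⁻ t in Ioi (0:ℝ),
          (UU (fun l => μ {x | l < ‖f x‖}) p₁ t * UU (fun l => μ {x | l < ‖g x‖}) p₂ t) ^ r
            * WW t := by
  rw [← key_eq (dist_anti μ (fun x => f x * g x)) (dist_rc μ (fun x => f x * g x)) hr hp]
  refine lintegral_mono_ae ?_
  filter_upwards [self_mem_ae_restrict measurableSet_Ioi] with t ht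
  have ht0 : (0:ℝ) < t := ht
  have hof0 : ENNReal.ofReal t ≠ 0 := by simp [ENNReal.ofReal_eq_zero, not_le, ht0]
  -- RHS rewriting
  have hUV : UU (fun l => μ {x | l < ‖f x‖}) p₁ t * UU (fun l => μ {x | l < ‖g x‖}) p₂ t
      = ENNReal.ofReal t ^ (1 / p) *
        (rr (fun l => μ {x | l < ‖f x‖}) (t / 2) * rr (fun l => μ {x | l < ‖g x‖}) (t / 2)) := by
    rw [UU, UU]
    rw [mul_mul_mul_comm, ← ENNReal.rpow_add_of_nonneg _ _ (by positivity) (by positivity),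
      ← hpsum]
  rw [hUV, ENNReal.mul_rpow_of_nonneg _ _ hr.le, ← ENNReal.rpow_mul,
    show 1 / p * r = r / p by field_simp, WW,
    mul_right_comm, ← div_eq_mul_inv,
    show ENNReal.ofReal t ^ (r / p) / ENNReal.ofReal t
      = ENNReal.ofReal t ^ (r / p - 1) from by
        rw [ENNReal.rpow_sub _ _ hof0 ENNReal.ofReal_ne_top, ENNReal.rpow_one]]
  exact mul_le_mul_right (ENNReal.rpow_le_rpow (rr_mul_le μ f g ht0.le) hr.le) _

/-- second chain identity: integral of a single split factor -/
lemma chain2 {d : ℝ → ℝ≥0∞} (hd : Antitone d)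
    (hrc : ∀ (l : ℝ) (u : ℝ≥0∞), u < d l → ∃ ε : ℝ, 0 < ε ∧ u < d (l + ε))
    {r' p' : ℝ} (hr' : 0 < r') (hp' : 0 < p') :
    ∫⁻ t in Ioi (0:ℝ), (UU d p' t) ^ r' * WW t
      = ENNReal.ofReal (2 ^ (r' / p' - 1)) * 2 *
          (ENNReal.ofReal p' * ∫⁻ l in Ioi (0:ℝ), ENNReal.ofReal l ^ (r' - 1) * d l ^ (r' / p')) := by
  set c : ℝ := r' / p' - 1 with hc
  set ψ : ℝ → ℝ≥0∞ := fun s => ENNReal.ofReal s ^ c * rr d s ^ r' with hψ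
  have hψmeas : Measurable ψ :=
    (ENNReal.measurable_ofReal.pow_const _).mul ((rr_measurable d).pow_const _)
  have step1 : ∫⁻ t in Ioi (0:ℝ), (UU d p' t) ^ r' * WW t
      = ∫⁻ t in Ioi (0:ℝ), ENNReal.ofReal (2 ^ c) * ψ (t / 2) := by
    refine setLIntegral_congr_fun measurableSet_Ioi ?_
    intro t ht
    dsimp only
    have ht0 : (0:ℝ) < t := ht
    have ht2 : (0:ℝ) < t / 2 := by linarith
    have hof0 : ENNReal.ofReal t ≠ 0 := by simp [ENNReal.ofReal_eq_zero, not_le, ht0]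
    rw [UU, WW, ENNReal.mul_rpow_of_nonneg _ _ hr'.le, ← ENNReal.rpow_mul,
      show 1 / p' * r' = r' / p' by field_simp,
      mul_right_comm, ← div_eq_mul_inv,
      show ENNReal.ofReal t ^ (r' / p') / ENNReal.ofReal t
        = ENNReal.ofReal t ^ c from by
          rw [hc, ENNReal.rpow_sub _ _ hof0 ENNReal.ofReal_ne_top, ENNReal.rpow_one]]
    have hsplit : ENNReal.ofReal t ^ c = ENNReal.ofReal (2 ^ c) * ENNReal.ofReal (t / 2) ^ c := by
      rw [ENNReal.ofReal_rpow_of_pos ht0, ENNReal.ofReal_rpow_of_pos ht2,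
        ← ENNReal.ofReal_mul (by positivity), ← Real.mul_rpow (by norm_num) ht2.le,
        show (2:ℝ) * (t / 2) = t by ring]
    rw [hsplit, hψ]
    ring
  rw [step1, lintegral_const_mul' _ _ ENNReal.ofReal_ne_top, scale ψ hψmeas,
    ← key_eq hd hrc hr' hp']
  ring

end Chain
end LorentzAux

open LorentzAux

/-- The Lorentz quasinorm
`‖f‖_{L^{p,q}} = ((q/p)∫₀^∞ (λ μ{|f| > λ}^{1/p})^q dλ/λ)^{1/q}`, with the weak-`L^p`
modification `sup_λ λ μ{|f|>λ}^{1/p}` when `q = ∞`. -/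
noncomputable def lorentzNorm {α : Type*} [MeasurableSpace α] (μ : Measure α)
    (f : α → ℂ) (p : ℝ) (q : ℝ≥0∞) : ℝ≥0∞ :=
  if q = ∞ then ⨆ (l : ℝ) (_ : 0 < l), ENNReal.ofReal l * (μ {x | l < ‖f x‖}) ^ (1 / p)
  else (ENNReal.ofReal (q.toReal / p) *
      ∫⁻ l in Set.Ioi (0 : ℝ),
        (ENNReal.ofReal l * (μ {x | l < ‖f x‖}) ^ (1 / p)) ^ q.toReal /
          ENNReal.ofReal l) ^ (1 / q.toReal)

lemma norm_pow_eq {α : Type} [MeasurableSpace α] (μ : Measure α) (f : α → ℂ)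
    {p' : ℝ} (hp' : 0 < p') {q' : ℝ≥0∞} (hq'0 : q' ≠ 0) (hq't : q' ≠ ⊤) :
    (lorentzNorm μ f p' q') ^ q'.toReal
      = ENNReal.ofReal (q'.toReal / p') *
          ∫⁻ l in Set.Ioi (0:ℝ),
            ENNReal.ofReal l ^ (q'.toReal - 1) * (μ {x | l < ‖f x‖}) ^ (q'.toReal / p') := by
  have hr : 0 < q'.toReal := ENNReal.toReal_pos hq'0 hq't
  simp only [lorentzNorm, if_neg hq't]
  rw [LorentzAux.integral_reform _ hr hp', ← ENNReal.rpow_mul,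
    one_div_mul_cancel hr.ne', ENNReal.rpow_one]

lemma norm_eq_sup {α : Type} [MeasurableSpace α] (μ : Measure α) (f : α → ℂ) (p' : ℝ) :
    lorentzNorm μ f p' ⊤
      = ⨆ (l : ℝ) (_ : 0 < l), ENNReal.ofReal l * (μ {x | l < ‖f x‖}) ^ (1 / p') := by
  simp only [lorentzNorm, if_true, eq_self_iff_true]

/-- Hölder inequality in Lorentz spaces: if `1/p = 1/p₁ + 1/p₂` and
`1/q = 1/q₁ + 1/q₂` with `0 < p₁, p₂, p < ∞`, `0 < q₁, q₂, q ≤ ∞`, then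
`‖fg‖_{L^{p,q}} ≤ C ‖f‖_{L^{p₁,q₁}} ‖g‖_{L^{p₂,q₂}}` whenever the right-hand side is
finite, with `C` depending only on the exponents. -/
theorem lorentz_holder (p₁ p₂ p : ℝ) (q₁ q₂ q : ℝ≥0∞)
    (hp₁ : 0 < p₁) (hp₂ : 0 < p₂) (hp : 0 < p)
    (hq₁ : 0 < q₁) (hq₂ : 0 < q₂) (hq : 0 < q)
    (hpsum : 1 / p = 1 / p₁ + 1 / p₂) (hqsum : q⁻¹ = q₁⁻¹ + q₂⁻¹) :
    ∃ C : ℝ, 0 < C ∧ ∀ {α : Type} [MeasurableSpace α] (μ : Measure α) (f g : α → ℂ),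
      Measurable f → Measurable g →
      lorentzNorm μ f p₁ q₁ < ∞ → lorentzNorm μ g p₂ q₂ < ∞ →
      lorentzNorm μ (fun x => f x * g x) p q ≤
        ENNReal.ofReal C * (lorentzNorm μ f p₁ q₁ * lorentzNorm μ g p₂ q₂) := by
  by_cases hqt : q = ⊤
  · -- q = ∞ : then q₁ = q₂ = ∞, a direct weak-type argument
    have hq0 : q⁻¹ = 0 := by rw [hqt]; simp
    rw [hq0] at hqsum
    have h12 := (add_eq_zero.mp hqsum.symm)
    have hq1t : q₁ = ⊤ := ENNReal.inv_eq_zero.mp h12.1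
    have hq2t : q₂ = ⊤ := ENNReal.inv_eq_zero.mp h12.2
    subst hqt; subst hq1t; subst hq2t
    set E : ℝ≥0∞ := (2:ℝ≥0∞) ^ (1/p) with hE
    have hEtop : E ≠ ⊤ :=
      ENNReal.rpow_ne_top_of_nonneg (by positivity) ENNReal.ofNat_ne_top
    refine ⟨E.toReal + 1, by positivity, ?_⟩
    intro α mα μ f g hf hg hN₁ hN₂
    set A := lorentzNorm μ f p₁ ⊤ with hA
    set B := lorentzNorm μ g p₂ ⊤ with hB
    have hEC : E ≤ ENNReal.ofReal (E.toReal + 1) := by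
      rw [ENNReal.ofReal_add ENNReal.toReal_nonneg zero_le_one,
        ENNReal.ofReal_toReal hEtop]
      exact le_self_add
    rw [norm_eq_sup]
    refine iSup₂_le fun l hl => ?_
    by_cases hA0 : A = 0
    · -- f vanishes a.e.
      have hdf0 : ∀ s : ℝ, 0 < s → μ {x | s < ‖f x‖} = 0 := by
        intro s hs
        have hterm : ENNReal.ofReal s * (μ {x | s < ‖f x‖}) ^ (1/p₁) ≤ A := by
          rw [hA, norm_eq_sup]
          exact le_iSup₂ (f := fun (l : ℝ) (_ : 0 < l) =>
            ENNReal.ofReal l * (μ {x | l < ‖f x‖}) ^ (1/p₁)) s hs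
        rw [hA0, nonpos_iff_eq_zero, mul_eq_zero] at hterm
        rcases hterm with h | h
        · exact absurd h (by simp [ENNReal.ofReal_eq_zero, not_le, hs])
        · rcases ENNReal.rpow_eq_zero_iff.mp h with ⟨h1, _⟩ | ⟨_, h2⟩
          · exact h1
          · exact absurd h2 (not_lt.mpr (by positivity))
      have hzero : μ {x | l < ‖f x * g x‖} = 0 := by
        refine le_antisymm ?_ zero_le
        refine (measure_mono (subset_pos_left f g hl.le)).trans ?_
        exact measure_pos_norm_le μ f fun s hs => le_of_eq (hdf0 s hs)
      rw [hzero, ENNReal.zero_rpow_of_pos (by positivity), mul_zero]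
      exact zero_le
    · by_cases hB0 : B = 0
      · have hdg0 : ∀ s : ℝ, 0 < s → μ {x | s < ‖g x‖} = 0 := by
          intro s hs
          have hterm : ENNReal.ofReal s * (μ {x | s < ‖g x‖}) ^ (1/p₂) ≤ B := by
            rw [hB, norm_eq_sup]
            exact le_iSup₂ (f := fun (l : ℝ) (_ : 0 < l) =>
              ENNReal.ofReal l * (μ {x | l < ‖g x‖}) ^ (1/p₂)) s hs
          rw [hB0, nonpos_iff_eq_zero, mul_eq_zero] at hterm
          rcases hterm with h | h
          · exact absurd h (by simp [ENNReal.ofReal_eq_zero, not_le, hs])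
          · rcases ENNReal.rpow_eq_zero_iff.mp h with ⟨h1, _⟩ | ⟨_, h2⟩
            · exact h1
            · exact absurd h2 (not_lt.mpr (by positivity))
        have hzero : μ {x | l < ‖f x * g x‖} = 0 := by
          refine le_antisymm ?_ zero_le
          refine (measure_mono (subset_pos_right f g hl.le)).trans ?_
          exact measure_pos_norm_le μ g fun s hs => le_of_eq (hdg0 s hs)
        rw [hzero, ENNReal.zero_rpow_of_pos (by positivity), mul_zero]
        exact zero_le
      · -- main weak-type computation
        have hAt : A ≠ ⊤ := hN₁.ne
        have hBt : B ≠ ⊤ := hN₂.ne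
        set Ar := A.toReal with hArdef
        set Br := B.toReal with hBrdef
        have hAr : 0 < Ar := ENNReal.toReal_pos hA0 hAt
        have hBr : 0 < Br := ENNReal.toReal_pos hB0 hBt
        set m : ℝ := (Ar * Br / l) ^ p with hmdef
        have hm : 0 < m := Real.rpow_pos_of_pos (by positivity) _
        set s : ℝ := Ar * m ^ (-(1/p₁)) with hsdef
        set u : ℝ := Br * m ^ (-(1/p₂)) with hudef
        have hspos : 0 < s := by
          have := Real.rpow_pos_of_pos hm (-(1/p₁)); positivity
        have hupos : 0 < u := by
          have := Real.rpow_pos_of_pos hm (-(1/p₂)); positivity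
        have hsu : s * u = l := by
          have h1 : m ^ (-(1/p₁)) * m ^ (-(1/p₂)) = m ^ (-(1/p)) := by
            rw [← Real.rpow_add hm]; congr 1; rw [hpsum]; ring
          calc s * u = Ar * Br * (m ^ (-(1/p₁)) * m ^ (-(1/p₂))) := by
                rw [hsdef, hudef]; ring
            _ = Ar * Br * m ^ (-(1/p)) := by rw [h1]
            _ = l := by
                rw [hmdef, ← Real.rpow_mul (by positivity),
                  show p * (-(1/p)) = -1 by field_simp, Real.rpow_neg_one]
                field_simp
        have hAs : Ar = s * m ^ (1/p₁) := by
          rw [hsdef, mul_assoc, ← Real.rpow_add hm]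
          norm_num
        have hBu : Br = u * m ^ (1/p₂) := by
          rw [hudef, mul_assoc, ← Real.rpow_add hm]
          norm_num
        have hdfs : μ {x | s < ‖f x‖} ≤ ENNReal.ofReal m := by
          have hterm : ENNReal.ofReal s * (μ {x | s < ‖f x‖}) ^ (1/p₁) ≤ A := by
            rw [hA, norm_eq_sup]
            exact le_iSup₂ (f := fun (l : ℝ) (_ : 0 < l) =>
              ENNReal.ofReal l * (μ {x | l < ‖f x‖}) ^ (1/p₁)) s hspos
          have hAeq : A = ENNReal.ofReal s * ENNReal.ofReal (m ^ (1/p₁)) := by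
            conv_lhs => rw [← ENNReal.ofReal_toReal hAt, ← hArdef]
            rw [show Ar = s * m ^ (1/p₁) from hAs, ENNReal.ofReal_mul hspos.le]
          rw [hAeq] at hterm
          have h2 := (ENNReal.mul_le_mul_iff_right
            (show ENNReal.ofReal s ≠ 0 by simp [ENNReal.ofReal_eq_zero, not_le, hspos])
            ENNReal.ofReal_ne_top).mp hterm
          have h3 : (μ {x | s < ‖f x‖}) ^ (1/p₁) ≤ (ENNReal.ofReal m) ^ (1/p₁) := by
            rw [ENNReal.ofReal_rpow_of_pos hm]; exact h2
          calc μ {x | s < ‖f x‖} = ((μ {x | s < ‖f x‖}) ^ (1/p₁)) ^ p₁ := by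
                rw [← ENNReal.rpow_mul, one_div_mul_cancel hp₁.ne', ENNReal.rpow_one]
            _ ≤ ((ENNReal.ofReal m) ^ (1/p₁)) ^ p₁ := ENNReal.rpow_le_rpow h3 hp₁.le
            _ = ENNReal.ofReal m := by
                rw [← ENNReal.rpow_mul, one_div_mul_cancel hp₁.ne', ENNReal.rpow_one]
        have hdgu : μ {x | u < ‖g x‖} ≤ ENNReal.ofReal m := by
          have hterm : ENNReal.ofReal u * (μ {x | u < ‖g x‖}) ^ (1/p₂) ≤ B := by
            rw [hB, norm_eq_sup]
            exact le_iSup₂ (f := fun (l : ℝ) (_ : 0 < l) =>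
              ENNReal.ofReal l * (μ {x | l < ‖g x‖}) ^ (1/p₂)) u hupos
          have hBeq : B = ENNReal.ofReal u * ENNReal.ofReal (m ^ (1/p₂)) := by
            conv_lhs => rw [← ENNReal.ofReal_toReal hBt, ← hBrdef]
            rw [show Br = u * m ^ (1/p₂) from hBu, ENNReal.ofReal_mul hupos.le]
          rw [hBeq] at hterm
          have h2 := (ENNReal.mul_le_mul_iff_right
            (show ENNReal.ofReal u ≠ 0 by simp [ENNReal.ofReal_eq_zero, not_le, hupos])
            ENNReal.ofReal_ne_top).mp hterm
          have h3 : (μ {x | u < ‖g x‖}) ^ (1/p₂) ≤ (ENNReal.ofReal m) ^ (1/p₂) := by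
            rw [ENNReal.ofReal_rpow_of_pos hm]; exact h2
          calc μ {x | u < ‖g x‖} = ((μ {x | u < ‖g x‖}) ^ (1/p₂)) ^ p₂ := by
                rw [← ENNReal.rpow_mul, one_div_mul_cancel hp₂.ne', ENNReal.rpow_one]
            _ ≤ ((ENNReal.ofReal m) ^ (1/p₂)) ^ p₂ := ENNReal.rpow_le_rpow h3 hp₂.le
            _ = ENNReal.ofReal m := by
                rw [← ENNReal.rpow_mul, one_div_mul_cancel hp₂.ne', ENNReal.rpow_one]
        have hsum2 : μ {x | l < ‖f x * g x‖} ≤ 2 * ENNReal.ofReal m := by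
          have h0 := dist_mul_le μ f g hspos.le hupos.le
          rw [hsu] at h0
          calc μ {x | l < ‖f x * g x‖} ≤ _ + _ := h0
            _ ≤ ENNReal.ofReal m + ENNReal.ofReal m := add_le_add hdfs hdgu
            _ = 2 * ENNReal.ofReal m := (two_mul _).symm
        have hlm : l * m ^ (1/p) = Ar * Br := by
          rw [hmdef, ← Real.rpow_mul (by positivity), mul_one_div_cancel hp.ne',
            Real.rpow_one]
          field_simp
        calc ENNReal.ofReal l * (μ {x | l < ‖f x * g x‖}) ^ (1/p)
            ≤ ENNReal.ofReal l * (2 * ENNReal.ofReal m) ^ (1/p) :=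
              mul_le_mul_right (ENNReal.rpow_le_rpow hsum2 (by positivity)) _
          _ = E * (A * B) := by
              rw [ENNReal.mul_rpow_of_nonneg _ _ (by positivity : (0:ℝ) ≤ 1/p),
                ENNReal.ofReal_rpow_of_pos hm]
              calc ENNReal.ofReal l * ((2:ℝ≥0∞) ^ (1/p) * ENNReal.ofReal (m ^ (1/p)))
                  = (2:ℝ≥0∞) ^ (1/p) * (ENNReal.ofReal l * ENNReal.ofReal (m ^ (1/p))) := by
                    ring
                _ = E * ENNReal.ofReal (l * m ^ (1/p)) := by
                    rw [hE, ← ENNReal.ofReal_mul hl.le]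
                _ = E * (A * B) := by
                    rw [hlm, ENNReal.ofReal_mul hAr.le, ENNReal.ofReal_toReal hAt,
                      ENNReal.ofReal_toReal hBt]
          _ ≤ ENNReal.ofReal (E.toReal + 1) * (A * B) := mul_le_mul_left hEC _
  · -- q finite
    have hr : 0 < q.toReal := ENNReal.toReal_pos hq.ne' hqt
    set r := q.toReal with hrdef
    by_cases hq1t : q₁ = ⊤
    · -- q₁ = ∞, so q = q₂
      subst hq1t
      have hq2t : q₂ ≠ ⊤ := by
        intro h
        subst h
        simp only [ENNReal.inv_top, add_zero, zero_add] at hqsum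
        exact hqt (ENNReal.inv_eq_zero.mp hqsum)
      have hq2eq : q₂ = q := by
        have h0 : q⁻¹ = q₂⁻¹ := by rw [hqsum]; simp
        have h1 := congrArg (·⁻¹) h0
        simpa using h1.symm
      subst hq2eq
      set K₁ : ℝ≥0∞ := ENNReal.ofReal (2 ^ (1/p₁)) with hK₁
      set E₂ : ℝ≥0∞ := ENNReal.ofReal (2 ^ (r / p₂ - 1)) * 2 * ENNReal.ofReal p₂ *
        (ENNReal.ofReal (r / p₂))⁻¹ with hE₂
      have hE₂top : E₂ ≠ ⊤ := by
        rw [hE₂]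
        refine ENNReal.mul_ne_top (ENNReal.mul_ne_top (ENNReal.mul_ne_top
          ENNReal.ofReal_ne_top ENNReal.ofNat_ne_top) ENNReal.ofReal_ne_top) ?_
        exact ENNReal.inv_ne_top.mpr (by simp only [ne_eq, ENNReal.ofReal_eq_zero, not_le]; positivity)
      set Efin : ℝ≥0∞ := (ENNReal.ofReal (r / p) * (ENNReal.ofReal p)⁻¹ * E₂) ^ (1 / r) * K₁
        with hEfin
      have hEfintop : Efin ≠ ⊤ := by
        rw [hEfin]
        refine ENNReal.mul_ne_top ?_ ENNReal.ofReal_ne_top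
        refine ENNReal.rpow_ne_top_of_nonneg (by positivity) ?_
        refine ENNReal.mul_ne_top (ENNReal.mul_ne_top ENNReal.ofReal_ne_top ?_) hE₂top
        exact ENNReal.inv_ne_top.mpr (by simp [ENNReal.ofReal_eq_zero, not_le, hp])
      refine ⟨Efin.toReal + 1, by positivity, ?_⟩
      intro α mα μ f g hf hg hN₁ hN₂
      set df : ℝ → ℝ≥0∞ := fun l => μ {x | l < ‖f x‖} with hdf
      set dg : ℝ → ℝ≥0∞ := fun l => μ {x | l < ‖g x‖} with hdg
      set N := lorentzNorm μ (fun x => f x * g x) p q₂ with hN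
      set N₁ := lorentzNorm μ f p₁ ⊤ with hN₁e
      set N₂ := lorentzNorm μ g p₂ q₂ with hN₂e
      set I := ∫⁻ l in Set.Ioi (0:ℝ),
        ENNReal.ofReal l ^ (r - 1) * (μ {x | l < ‖f x * g x‖}) ^ (r / p) with hI
      set I₂ := ∫⁻ l in Set.Ioi (0:ℝ),
        ENNReal.ofReal l ^ (r - 1) * dg l ^ (r / p₂) with hI₂
      have hNpow : N ^ r = ENNReal.ofReal (r / p) * I := by
        rw [hN, norm_pow_eq μ _ hp hq.ne' hqt]
      have hN₂pow : N₂ ^ r = ENNReal.ofReal (r / p₂) * I₂ := by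
        rw [hN₂e, norm_pow_eq μ _ hp₂ hq.ne' hqt]
      have hX₂0 : ENNReal.ofReal (r / p₂) ≠ 0 := by
        simp only [ne_eq, ENNReal.ofReal_eq_zero, not_le]; positivity
      have hI₂val : I₂ = (ENNReal.ofReal (r / p₂))⁻¹ * N₂ ^ r := by
        rw [hN₂pow, ← mul_assoc, ENNReal.inv_mul_cancel hX₂0 ENNReal.ofReal_ne_top, one_mul]
      have hc2g := chain2 (dist_anti μ g) (dist_rc μ g) hr hp₂
      have hI₂eq : ∫⁻ t in Set.Ioi (0:ℝ), (UU dg p₂ t) ^ r * WW t = E₂ * N₂ ^ r := by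
        rw [hc2g, ← hI₂, hI₂val, hE₂]; ring
      have hchain1 := chain1 μ f g hp₁ hp₂ hp hr hpsum
      have hN₁top : N₁ ≠ ⊤ := hN₁.ne
      have hUbound : ∀ t ∈ Set.Ioi (0:ℝ), UU df p₁ t ≤ K₁ * N₁ := by
        intro t ht
        have ht0 : (0:ℝ) < t := ht
        have ht2 : (0:ℝ) < t / 2 := by linarith
        have hsplit : ENNReal.ofReal t ^ (1/p₁) = K₁ * ENNReal.ofReal (t/2) ^ (1/p₁) := by
          rw [hK₁, ENNReal.ofReal_rpow_of_pos ht0, ENNReal.ofReal_rpow_of_pos ht2,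
            ← ENNReal.ofReal_mul (by positivity), ← Real.mul_rpow (by norm_num) ht2.le,
            show (2:ℝ) * (t / 2) = t by ring]
        rw [UU, hsplit, mul_assoc]
        refine mul_le_mul_right ?_ _
        have hw := weak_bound (dist_anti μ f) (dist_rc μ f) hp₁ ht2
        rw [hN₁e, norm_eq_sup]
        exact hw
      have hKN : (K₁ * N₁) ^ r ≠ ⊤ :=
        ENNReal.rpow_ne_top_of_nonneg hr.le
          (ENNReal.mul_ne_top ENNReal.ofReal_ne_top hN₁top)
      have hstep : ∫⁻ t in Set.Ioi (0:ℝ), (UU df p₁ t * UU dg p₂ t) ^ r * WW t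
          ≤ (K₁ * N₁) ^ r * ∫⁻ t in Set.Ioi (0:ℝ), (UU dg p₂ t) ^ r * WW t := by
        rw [← lintegral_const_mul' _ _ hKN]
        refine lintegral_mono_ae ?_
        filter_upwards [self_mem_ae_restrict measurableSet_Ioi] with t ht
        calc (UU df p₁ t * UU dg p₂ t) ^ r * WW t
            = UU df p₁ t ^ r * (UU dg p₂ t ^ r * WW t) := by
              rw [ENNReal.mul_rpow_of_nonneg _ _ hr.le, mul_assoc]
          _ ≤ (K₁ * N₁) ^ r * (UU dg p₂ t ^ r * WW t) :=
              mul_le_mul_left (ENNReal.rpow_le_rpow (hUbound t ht) hr.le) _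
      have hmain : ENNReal.ofReal p * I ≤ (K₁ * N₁) ^ r * (E₂ * N₂ ^ r) := by
        refine hchain1.trans (hstep.trans ?_)
        rw [hI₂eq]
      have hp0 : ENNReal.ofReal p ≠ 0 := by
        simp only [ne_eq, ENNReal.ofReal_eq_zero, not_le]; exact hp
      have hIle : I ≤ (ENNReal.ofReal p)⁻¹ * ((K₁ * N₁) ^ r * (E₂ * N₂ ^ r)) := by
        calc I = (ENNReal.ofReal p)⁻¹ * (ENNReal.ofReal p * I) := by
              rw [← mul_assoc, ENNReal.inv_mul_cancel hp0 ENNReal.ofReal_ne_top, one_mul]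
          _ ≤ _ := mul_le_mul_right hmain _
      have hfinal : N ≤ Efin * (N₁ * N₂) := by
        have hNrr : N = (N ^ r) ^ (1/r) := by
          rw [← ENNReal.rpow_mul, mul_one_div_cancel hr.ne', ENNReal.rpow_one]
        rw [hNrr, hNpow]
        calc (ENNReal.ofReal (r/p) * I) ^ (1/r)
            ≤ (ENNReal.ofReal (r/p) * ((ENNReal.ofReal p)⁻¹ *
                ((K₁ * N₁) ^ r * (E₂ * N₂ ^ r)))) ^ (1/r) :=
              ENNReal.rpow_le_rpow (mul_le_mul_right hIle _) (by positivity)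
          _ = (ENNReal.ofReal (r / p) * (ENNReal.ofReal p)⁻¹ * E₂ *
                (K₁ * (N₁ * N₂)) ^ r) ^ (1/r) := by
              rw [ENNReal.mul_rpow_of_nonneg K₁ (N₁ * N₂) hr.le,
                ENNReal.mul_rpow_of_nonneg N₁ N₂ hr.le,
                ENNReal.mul_rpow_of_nonneg K₁ N₁ hr.le]
              ring
          _ = Efin * (N₁ * N₂) := by
              rw [ENNReal.mul_rpow_of_nonneg _ _ (by positivity : (0:ℝ) ≤ 1/r), hEfin,
                ← ENNReal.rpow_mul, mul_one_div_cancel hr.ne', ENNReal.rpow_one]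
              ring
      refine hfinal.trans (mul_le_mul_left ?_ _)
      rw [ENNReal.ofReal_add ENNReal.toReal_nonneg zero_le_one,
        ENNReal.ofReal_toReal hEfintop]
      exact le_self_add
    · by_cases hq2t : q₂ = ⊤
      · -- q₂ = ∞, so q = q₁
        subst hq2t
        have hq1eq : q₁ = q := by
          have h0 : q⁻¹ = q₁⁻¹ := by rw [hqsum]; simp
          have h1 := congrArg (·⁻¹) h0
          simpa using h1.symm
        subst hq1eq
        set K₂ : ℝ≥0∞ := ENNReal.ofReal (2 ^ (1/p₂)) with hK₂
        set E₁ : ℝ≥0∞ := ENNReal.ofReal (2 ^ (r / p₁ - 1)) * 2 * ENNReal.ofReal p₁ *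
          (ENNReal.ofReal (r / p₁))⁻¹ with hE₁
        have hE₁top : E₁ ≠ ⊤ := by
          rw [hE₁]
          refine ENNReal.mul_ne_top (ENNReal.mul_ne_top (ENNReal.mul_ne_top
            ENNReal.ofReal_ne_top ENNReal.ofNat_ne_top) ENNReal.ofReal_ne_top) ?_
          exact ENNReal.inv_ne_top.mpr (by simp only [ne_eq, ENNReal.ofReal_eq_zero, not_le]; positivity)
        set Efin : ℝ≥0∞ := (ENNReal.ofReal (r / p) * (ENNReal.ofReal p)⁻¹ * E₁) ^ (1 / r) * K₂
          with hEfin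
        have hEfintop : Efin ≠ ⊤ := by
          rw [hEfin]
          refine ENNReal.mul_ne_top ?_ ENNReal.ofReal_ne_top
          refine ENNReal.rpow_ne_top_of_nonneg (by positivity) ?_
          refine ENNReal.mul_ne_top (ENNReal.mul_ne_top ENNReal.ofReal_ne_top ?_) hE₁top
          exact ENNReal.inv_ne_top.mpr (by simp [ENNReal.ofReal_eq_zero, not_le, hp])
        refine ⟨Efin.toReal + 1, by positivity, ?_⟩
        intro α mα μ f g hf hg hN₁ hN₂
        set df : ℝ → ℝ≥0∞ := fun l => μ {x | l < ‖f x‖} with hdf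
        set dg : ℝ → ℝ≥0∞ := fun l => μ {x | l < ‖g x‖} with hdg
        set N := lorentzNorm μ (fun x => f x * g x) p q₁ with hN
        set N₁ := lorentzNorm μ f p₁ q₁ with hN₁e
        set N₂ := lorentzNorm μ g p₂ ⊤ with hN₂e
        set I := ∫⁻ l in Set.Ioi (0:ℝ),
          ENNReal.ofReal l ^ (r - 1) * (μ {x | l < ‖f x * g x‖}) ^ (r / p) with hI
        set I₁ := ∫⁻ l in Set.Ioi (0:ℝ),
          ENNReal.ofReal l ^ (r - 1) * df l ^ (r / p₁) with hI₁
        have hNpow : N ^ r = ENNReal.ofReal (r / p) * I := by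
          rw [hN, norm_pow_eq μ _ hp hq.ne' hqt]
        have hN₁pow : N₁ ^ r = ENNReal.ofReal (r / p₁) * I₁ := by
          rw [hN₁e, norm_pow_eq μ _ hp₁ hq.ne' hqt]
        have hX₁0 : ENNReal.ofReal (r / p₁) ≠ 0 := by
          simp only [ne_eq, ENNReal.ofReal_eq_zero, not_le]; positivity
        have hI₁val : I₁ = (ENNReal.ofReal (r / p₁))⁻¹ * N₁ ^ r := by
          rw [hN₁pow, ← mul_assoc, ENNReal.inv_mul_cancel hX₁0 ENNReal.ofReal_ne_top, one_mul]
        have hc2f := chain2 (dist_anti μ f) (dist_rc μ f) hr hp₁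
        have hI₁eq : ∫⁻ t in Set.Ioi (0:ℝ), (UU df p₁ t) ^ r * WW t = E₁ * N₁ ^ r := by
          rw [hc2f, ← hI₁, hI₁val, hE₁]; ring
        have hchain1 := chain1 μ f g hp₁ hp₂ hp hr hpsum
        have hN₂top : N₂ ≠ ⊤ := hN₂.ne
        have hUbound : ∀ t ∈ Set.Ioi (0:ℝ), UU dg p₂ t ≤ K₂ * N₂ := by
          intro t ht
          have ht0 : (0:ℝ) < t := ht
          have ht2 : (0:ℝ) < t / 2 := by linarith
          have hsplit : ENNReal.ofReal t ^ (1/p₂) = K₂ * ENNReal.ofReal (t/2) ^ (1/p₂) := by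
            rw [hK₂, ENNReal.ofReal_rpow_of_pos ht0, ENNReal.ofReal_rpow_of_pos ht2,
              ← ENNReal.ofReal_mul (by positivity), ← Real.mul_rpow (by norm_num) ht2.le,
              show (2:ℝ) * (t / 2) = t by ring]
          rw [UU, hsplit, mul_assoc]
          refine mul_le_mul_right ?_ _
          have hw := weak_bound (dist_anti μ g) (dist_rc μ g) hp₂ ht2
          rw [hN₂e, norm_eq_sup]
          exact hw
        have hKN : (K₂ * N₂) ^ r ≠ ⊤ :=
          ENNReal.rpow_ne_top_of_nonneg hr.le
            (ENNReal.mul_ne_top ENNReal.ofReal_ne_top hN₂top)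
        have hstep : ∫⁻ t in Set.Ioi (0:ℝ), (UU df p₁ t * UU dg p₂ t) ^ r * WW t
            ≤ (K₂ * N₂) ^ r * ∫⁻ t in Set.Ioi (0:ℝ), (UU df p₁ t) ^ r * WW t := by
          rw [← lintegral_const_mul' _ _ hKN]
          refine lintegral_mono_ae ?_
          filter_upwards [self_mem_ae_restrict measurableSet_Ioi] with t ht
          calc (UU df p₁ t * UU dg p₂ t) ^ r * WW t
              = UU dg p₂ t ^ r * (UU df p₁ t ^ r * WW t) := by
                rw [ENNReal.mul_rpow_of_nonneg _ _ hr.le]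
                ring
            _ ≤ (K₂ * N₂) ^ r * (UU df p₁ t ^ r * WW t) :=
                mul_le_mul_left (ENNReal.rpow_le_rpow (hUbound t ht) hr.le) _
        have hmain : ENNReal.ofReal p * I ≤ (K₂ * N₂) ^ r * (E₁ * N₁ ^ r) := by
          refine hchain1.trans (hstep.trans ?_)
          rw [hI₁eq]
        have hp0 : ENNReal.ofReal p ≠ 0 := by
          simp only [ne_eq, ENNReal.ofReal_eq_zero, not_le]; exact hp
        have hIle : I ≤ (ENNReal.ofReal p)⁻¹ * ((K₂ * N₂) ^ r * (E₁ * N₁ ^ r)) := by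
          calc I = (ENNReal.ofReal p)⁻¹ * (ENNReal.ofReal p * I) := by
                rw [← mul_assoc, ENNReal.inv_mul_cancel hp0 ENNReal.ofReal_ne_top, one_mul]
            _ ≤ _ := mul_le_mul_right hmain _
        have hfinal : N ≤ Efin * (N₁ * N₂) := by
          have hNrr : N = (N ^ r) ^ (1/r) := by
            rw [← ENNReal.rpow_mul, mul_one_div_cancel hr.ne', ENNReal.rpow_one]
          rw [hNrr, hNpow]
          calc (ENNReal.ofReal (r/p) * I) ^ (1/r)
              ≤ (ENNReal.ofReal (r/p) * ((ENNReal.ofReal p)⁻¹ *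
                  ((K₂ * N₂) ^ r * (E₁ * N₁ ^ r)))) ^ (1/r) :=
                ENNReal.rpow_le_rpow (mul_le_mul_right hIle _) (by positivity)
            _ = (ENNReal.ofReal (r / p) * (ENNReal.ofReal p)⁻¹ * E₁ *
                  (K₂ * (N₁ * N₂)) ^ r) ^ (1/r) := by
                rw [ENNReal.mul_rpow_of_nonneg K₂ (N₁ * N₂) hr.le,
                  ENNReal.mul_rpow_of_nonneg N₁ N₂ hr.le,
                  ENNReal.mul_rpow_of_nonneg K₂ N₂ hr.le]
                ring
            _ = Efin * (N₁ * N₂) := by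
                rw [ENNReal.mul_rpow_of_nonneg _ _ (by positivity : (0:ℝ) ≤ 1/r), hEfin,
                  ← ENNReal.rpow_mul, mul_one_div_cancel hr.ne', ENNReal.rpow_one]
                ring
        refine hfinal.trans (mul_le_mul_left ?_ _)
        rw [ENNReal.ofReal_add ENNReal.toReal_nonneg zero_le_one,
          ENNReal.ofReal_toReal hEfintop]
        exact le_self_add
      · -- both q₁, q₂ finite
        set r₁ := q₁.toReal with hr₁def
        set r₂ := q₂.toReal with hr₂def
        have hr₁ : 0 < r₁ := ENNReal.toReal_pos hq₁.ne' hq1t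
        have hr₂ : 0 < r₂ := ENNReal.toReal_pos hq₂.ne' hq2t
        have h1 : r < r₁ := by
          have hlt : q < q₁ := by
            rw [← ENNReal.inv_lt_inv, hqsum]
            exact ENNReal.lt_add_right (ENNReal.inv_ne_top.mpr hq₁.ne')
              (ENNReal.inv_ne_zero.mpr hq2t)
          exact (ENNReal.toReal_lt_toReal hqt hq1t).mpr hlt
        have h2 : r < r₂ := by
          have hlt : q < q₂ := by
            rw [← ENNReal.inv_lt_inv, hqsum, add_comm]
            exact ENNReal.lt_add_right (ENNReal.inv_ne_top.mpr hq₂.ne')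
              (ENNReal.inv_ne_zero.mpr hq1t)
          exact (ENNReal.toReal_lt_toReal hqt hq2t).mpr hlt
        have hsumr : r / r₁ + r / r₂ = 1 := by
          have h0 : (q⁻¹).toReal = (q₁⁻¹).toReal + (q₂⁻¹).toReal := by
            rw [hqsum]
            exact ENNReal.toReal_add (ENNReal.inv_ne_top.mpr hq₁.ne')
              (ENNReal.inv_ne_top.mpr hq₂.ne')
          rw [ENNReal.toReal_inv, ENNReal.toReal_inv, ENNReal.toReal_inv] at h0
          calc r / r₁ + r / r₂ = r * (r₁⁻¹ + r₂⁻¹) := by ring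
            _ = r * r⁻¹ := by rw [← h0]
            _ = 1 := mul_inv_cancel₀ hr.ne'
        -- constants
        set E₁ : ℝ≥0∞ := ENNReal.ofReal (2 ^ (r₁ / p₁ - 1)) * 2 * ENNReal.ofReal p₁ *
          (ENNReal.ofReal (r₁ / p₁))⁻¹ with hE₁
        set E₂ : ℝ≥0∞ := ENNReal.ofReal (2 ^ (r₂ / p₂ - 1)) * 2 * ENNReal.ofReal p₂ *
          (ENNReal.ofReal (r₂ / p₂))⁻¹ with hE₂
        have hE₁top : E₁ ≠ ⊤ := by
          rw [hE₁]
          refine ENNReal.mul_ne_top (ENNReal.mul_ne_top (ENNReal.mul_ne_top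
            ENNReal.ofReal_ne_top ENNReal.ofNat_ne_top) ENNReal.ofReal_ne_top) ?_
          exact ENNReal.inv_ne_top.mpr (by simp [ENNReal.ofReal_eq_zero, not_le]; positivity)
        have hE₂top : E₂ ≠ ⊤ := by
          rw [hE₂]
          refine ENNReal.mul_ne_top (ENNReal.mul_ne_top (ENNReal.mul_ne_top
            ENNReal.ofReal_ne_top ENNReal.ofNat_ne_top) ENNReal.ofReal_ne_top) ?_
          exact ENNReal.inv_ne_top.mpr (by simp [ENNReal.ofReal_eq_zero, not_le]; positivity)
        set Efin : ℝ≥0∞ := (ENNReal.ofReal (r / p) * (ENNReal.ofReal p)⁻¹ *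
          (E₁ ^ (r / r₁) * E₂ ^ (r / r₂))) ^ (1 / r) with hEfin
        have hEfintop : Efin ≠ ⊤ := by
          rw [hEfin]
          refine ENNReal.rpow_ne_top_of_nonneg (by positivity) ?_
          refine ENNReal.mul_ne_top (ENNReal.mul_ne_top ENNReal.ofReal_ne_top ?_) ?_
          · exact ENNReal.inv_ne_top.mpr (by simp [ENNReal.ofReal_eq_zero, not_le, hp])
          · exact ENNReal.mul_ne_top
              (ENNReal.rpow_ne_top_of_nonneg (by positivity) hE₁top)
              (ENNReal.rpow_ne_top_of_nonneg (by positivity) hE₂top)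
        refine ⟨Efin.toReal + 1, by positivity, ?_⟩
        intro α mα μ f g hf hg hN₁ hN₂
        set df : ℝ → ℝ≥0∞ := fun l => μ {x | l < ‖f x‖} with hdf
        set dg : ℝ → ℝ≥0∞ := fun l => μ {x | l < ‖g x‖} with hdg
        set N := lorentzNorm μ (fun x => f x * g x) p q with hN
        set N₁ := lorentzNorm μ f p₁ q₁ with hN₁e
        set N₂ := lorentzNorm μ g p₂ q₂ with hN₂e
        set I := ∫⁻ l in Set.Ioi (0:ℝ),
          ENNReal.ofReal l ^ (r - 1) * (μ {x | l < ‖f x * g x‖}) ^ (r / p) with hI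
        set I₁ := ∫⁻ l in Set.Ioi (0:ℝ),
          ENNReal.ofReal l ^ (r₁ - 1) * df l ^ (r₁ / p₁) with hI₁
        set I₂ := ∫⁻ l in Set.Ioi (0:ℝ),
          ENNReal.ofReal l ^ (r₂ - 1) * dg l ^ (r₂ / p₂) with hI₂
        have hNpow : N ^ r = ENNReal.ofReal (r / p) * I := by
          rw [hN, norm_pow_eq μ _ hp hq.ne' hqt]
        have hN₁pow : N₁ ^ r₁ = ENNReal.ofReal (r₁ / p₁) * I₁ := by
          rw [hN₁e, norm_pow_eq μ _ hp₁ hq₁.ne' hq1t]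
        have hN₂pow : N₂ ^ r₂ = ENNReal.ofReal (r₂ / p₂) * I₂ := by
          rw [hN₂e, norm_pow_eq μ _ hp₂ hq₂.ne' hq2t]
        have hX₁0 : ENNReal.ofReal (r₁ / p₁) ≠ 0 := by
          simp only [ne_eq, ENNReal.ofReal_eq_zero, not_le]; positivity
        have hX₂0 : ENNReal.ofReal (r₂ / p₂) ≠ 0 := by
          simp only [ne_eq, ENNReal.ofReal_eq_zero, not_le]; positivity
        have hI₁val : I₁ = (ENNReal.ofReal (r₁ / p₁))⁻¹ * N₁ ^ r₁ := by
          rw [hN₁pow, ← mul_assoc, ENNReal.inv_mul_cancel hX₁0 ENNReal.ofReal_ne_top,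
            one_mul]
        have hI₂val : I₂ = (ENNReal.ofReal (r₂ / p₂))⁻¹ * N₂ ^ r₂ := by
          rw [hN₂pow, ← mul_assoc, ENNReal.inv_mul_cancel hX₂0 ENNReal.ofReal_ne_top,
            one_mul]
        have hc2f := chain2 (dist_anti μ f) (dist_rc μ f) hr₁ hp₁
        have hc2g := chain2 (dist_anti μ g) (dist_rc μ g) hr₂ hp₂
        have hI₁eq : ∫⁻ t in Set.Ioi (0:ℝ), (UU df p₁ t) ^ r₁ * WW t = E₁ * N₁ ^ r₁ := by
          rw [hc2f, ← hI₁, hI₁val, hE₁]; ring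
        have hI₂eq : ∫⁻ t in Set.Ioi (0:ℝ), (UU dg p₂ t) ^ r₂ * WW t = E₂ * N₂ ^ r₂ := by
          rw [hc2g, ← hI₂, hI₂val, hE₂]; ring
        have hchain1 := chain1 μ f g hp₁ hp₂ hp hr hpsum
        have hholder := holder3 (volume.restrict (Set.Ioi (0:ℝ)))
          (UU_measurable df p₁) (UU_measurable dg p₂) WW_measurable hr h1 h2 hsumr
        have hmain : ENNReal.ofReal p * I ≤
            (E₁ * N₁ ^ r₁) ^ (r / r₁) * (E₂ * N₂ ^ r₂) ^ (r / r₂) := by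
          refine hchain1.trans (hholder.trans ?_)
          rw [hI₁eq, hI₂eq]
        have hp0 : ENNReal.ofReal p ≠ 0 := by
          simp only [ne_eq, ENNReal.ofReal_eq_zero, not_le]; exact hp
        have hIle : I ≤ (ENNReal.ofReal p)⁻¹ *
            ((E₁ * N₁ ^ r₁) ^ (r / r₁) * (E₂ * N₂ ^ r₂) ^ (r / r₂)) := by
          calc I = (ENNReal.ofReal p)⁻¹ * (ENNReal.ofReal p * I) := by
                rw [← mul_assoc, ENNReal.inv_mul_cancel hp0 ENNReal.ofReal_ne_top, one_mul]
            _ ≤ _ := mul_le_mul_right hmain _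
        have hfinal : N ≤ Efin * (N₁ * N₂) := by
          have hNrr : N = (N ^ r) ^ (1/r) := by
            rw [← ENNReal.rpow_mul, mul_one_div_cancel hr.ne', ENNReal.rpow_one]
          rw [hNrr, hNpow]
          calc (ENNReal.ofReal (r/p) * I) ^ (1/r)
              ≤ (ENNReal.ofReal (r/p) * ((ENNReal.ofReal p)⁻¹ *
                  ((E₁ * N₁ ^ r₁) ^ (r / r₁) * (E₂ * N₂ ^ r₂) ^ (r / r₂)))) ^ (1/r) :=
                ENNReal.rpow_le_rpow (mul_le_mul_right hIle _) (by positivity)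
            _ = (ENNReal.ofReal (r / p) * (ENNReal.ofReal p)⁻¹ *
                  (E₁ ^ (r / r₁) * E₂ ^ (r / r₂)) * (N₁ * N₂) ^ r) ^ (1/r) := by
                rw [ENNReal.mul_rpow_of_nonneg E₁ _ (by positivity),
                  ENNReal.mul_rpow_of_nonneg E₂ _ (by positivity),
                  ← ENNReal.rpow_mul N₁, ← ENNReal.rpow_mul N₂,
                  show r₁ * (r / r₁) = r by field_simp,
                  show r₂ * (r / r₂) = r by field_simp,
                  ENNReal.mul_rpow_of_nonneg N₁ N₂ hr.le]
                ring
            _ = Efin * (N₁ * N₂) := by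
                rw [ENNReal.mul_rpow_of_nonneg _ _ (by positivity : (0:ℝ) ≤ 1/r), hEfin]
                congr 1
                rw [← ENNReal.rpow_mul, mul_one_div_cancel hr.ne', ENNReal.rpow_one]
        refine hfinal.trans (mul_le_mul_left ?_ _)
        rw [ENNReal.ofReal_add ENNReal.toReal_nonneg zero_le_one,
          ENNReal.ofReal_toReal hEfintop]
        exact le_self_add
end
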